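/- arXiv:1507.03726 — 8 statements merged into one kernel-verified Lean document; each statement's English description precedes it below -/
import Mathlib

section
/- For any group G, if x ∈ C(G) := ⋂_{a∈G} N_G(C_G(a)), then for every y ∈ G one has [[x,y],y] = 1 (x is a left 2-Engel element with respect to every element of G in this sense). -/
/-- The norm of centralizers: intersection of normalizers of centralizers of all elements. -/
def normCent (G : Type*) [Group G] : Subgroup G :=
  ⨅ a : G, Subgroup.normalizer (Subgroup.centralizer {a} : Set G)

theorem normCent_normal (G : Type*) [Group G] : (normCent G).Normal := by
  constructor
  intro n hn g
  simp only [normCent, Subgroup.mem_iInf] at hn ⊢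
  intro a
  rw [Subgroup.mem_normalizer_iff]
  intro h
  have h1 := Subgroup.mem_normalizer_iff.mp (hn (g⁻¹ * a * g)) (g⁻¹ * h * g)
  simp only [Subgroup.mem_centralizer_singleton_iff] at h1 ⊢
  constructor
  · intro hc
    have e0 : (g⁻¹ * h * g) * (g⁻¹ * a * g) = (g⁻¹ * a * g) * (g⁻¹ * h * g) := by
      calc (g⁻¹ * h * g) * (g⁻¹ * a * g) = g⁻¹ * (h * a) * g := by group
        _ = g⁻¹ * (a * h) * g := by rw [hc]
        _ = (g⁻¹ * a * g) * (g⁻¹ * h * g) := by group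
    have e1 := h1.mp e0
    calc g * n * g⁻¹ * h * (g * n * g⁻¹)⁻¹ * a
        = g * ((n * (g⁻¹ * h * g) * n⁻¹) * (g⁻¹*a*g)) * g⁻¹ := by group
      _ = g * ((g⁻¹*a*g) * (n * (g⁻¹ * h * g) * n⁻¹)) * g⁻¹ := by rw [e1]
      _ = a * (g * n * g⁻¹ * h * (g * n * g⁻¹)⁻¹) := by group
  · intro hc
    have e0 : (n * (g⁻¹ * h * g) * n⁻¹) * (g⁻¹*a*g) = (g⁻¹*a*g) * (n * (g⁻¹ * h * g) * n⁻¹) := by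
      calc (n * (g⁻¹ * h * g) * n⁻¹) * (g⁻¹*a*g)
          = g⁻¹ * ((g * n * g⁻¹ * h * (g * n * g⁻¹)⁻¹) * a) * g := by group
        _ = g⁻¹ * (a * (g * n * g⁻¹ * h * (g * n * g⁻¹)⁻¹)) * g := by rw [hc]
        _ = (g⁻¹*a*g) * (n * (g⁻¹ * h * g) * n⁻¹) := by group
    have e1 := h1.mpr e0
    calc h * a = g * ((g⁻¹*h*g) * (g⁻¹*a*g)) * g⁻¹ := by group
      _ = g * ((g⁻¹*a*g) * (g⁻¹*h*g)) * g⁻¹ := by rw [e1]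
      _ = a * h := by group

open scoped commutatorElement

/-- Every element of `C(G)` is left 2-Engel with respect to every element of `G`. -/
theorem stmt1 (G : Type*) [Group G] (x : G) (hx : x ∈ normCent G) :
    ∀ y : G, ⁅⁅x, y⁆, y⁆ = 1 := by
  intro y
  simp only [normCent, Subgroup.mem_iInf] at hx
  have h1 := (Subgroup.mem_normalizer_iff.mp (hx y)) y
  simp only [Subgroup.mem_centralizer_singleton_iff] at h1
  have hc : (x * y * x⁻¹) * y = y * (x * y * x⁻¹) := h1.mp trivial
  simp only [commutatorElement_def]
  calc x * y * x⁻¹ * y⁻¹ * y * (x * y * x⁻¹ * y⁻¹)⁻¹ * y⁻¹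
      = ((x * y * x⁻¹) * y) * (x * y⁻¹ * x⁻¹) * y⁻¹ := by group
    _ = (y * (x * y * x⁻¹)) * (x * y⁻¹ * x⁻¹) * y⁻¹ := by rw [hc]
    _ = 1 := by group
end

section
/- For any group G, the subgroup C(G) = ⋂_{a∈G} N_G(C_G(a)) is nilpotent of class at most 3. -/
open scoped commutatorElement

section Engel

variable {G : Type*} [Group G]

private lemma mulL (a b c : G) : ⁅a*b, c⁆ = a * ⁅b,c⁆ * a⁻¹ * ⁅a,c⁆ := by group
private lemma mulR (a b c : G) : ⁅a, b*c⁆ = ⁅a,b⁆ * (b * ⁅a,c⁆ * b⁻¹) := by group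

private lemma conj_comm_eq {p q : G} (h : Commute q p) : q * p * q⁻¹ = p := by
  rw [h.eq]; group

private def NCl (a : G) : Subgroup G := Subgroup.normalClosure {a}

private lemma nc_self (a : G) : a ∈ NCl a :=
  Subgroup.subset_normalClosure rfl

private lemma nc_conj {a x : G} (h : x ∈ NCl a) (g : G) : g * x * g⁻¹ ∈ NCl a :=
  Subgroup.normalClosure_normal.conj_mem x h g

private lemma nc_commL {a : G} (x : G) {y : G} (h : y ∈ NCl a) : ⁅x,y⁆ ∈ NCl a := by
  have e : ⁅x,y⁆ = (x*y*x⁻¹) * y⁻¹ := by group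
  rw [e]; exact mul_mem (nc_conj h x) (inv_mem h)

private lemma nc_commR {a x : G} (h : x ∈ NCl a) (y : G) : ⁅x,y⁆ ∈ NCl a := by
  have e : ⁅x,y⁆ = x * (y*x*y⁻¹)⁻¹ := by group
  rw [e]; exact mul_mem h (inv_mem (nc_conj h y))

variable (E : ∀ a b : G, ⁅⁅a,b⁆,b⁆ = 1)
include E

private lemma engel_c1 (a b : G) : Commute ⁅a,b⁆ b :=
  commutatorElement_eq_one_iff_commute.mp (E a b)

private lemma engel_c2 (a b : G) : Commute ⁅a,b⁆ a := by
  have h := engel_c1 E b a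
  rw [← commutatorElement_inv] at h
  exact Commute.inv_left_iff.mp h

private lemma engel_conj_comm (a g h : G) : Commute (g*a*g⁻¹) (h*a*h⁻¹) := by
  have base : Commute a ((g⁻¹*h)*a*(g⁻¹*h)⁻¹) := by
    have h1 : (g⁻¹*h)*a*(g⁻¹*h)⁻¹ = ⁅g⁻¹*h,a⁆ * a := by group
    rw [h1]; exact (engel_c1 E (g⁻¹*h) a).symm.mul_right (Commute.refl a)
  have key := base.eq
  show (g*a*g⁻¹)*(h*a*h⁻¹) = (h*a*h⁻¹)*(g*a*g⁻¹)
  calc (g*a*g⁻¹)*(h*a*h⁻¹) = g*(a*((g⁻¹*h)*a*(g⁻¹*h)⁻¹))*g⁻¹ := by group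
    _ = g*(((g⁻¹*h)*a*(g⁻¹*h)⁻¹)*a)*g⁻¹ := by rw [key]
    _ = (h*a*h⁻¹)*(g*a*g⁻¹) := by group

private lemma nc_comm {a : G} {x y : G} (hx : x ∈ NCl a) (hy : y ∈ NCl a) :
    Commute x y := by
  have base : ∀ u ∈ Group.conjugatesOfSet ({a} : Set G),
      ∀ v ∈ Group.conjugatesOfSet ({a} : Set G), Commute u v := by
    intro u hu v hv
    rw [Group.mem_conjugatesOfSet_iff] at hu hv
    obtain ⟨a', ha', hca⟩ := hu
    obtain ⟨a'', ha'', hcb⟩ := hv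
    rw [Set.mem_singleton_iff] at ha' ha''
    rw [ha'] at hca; rw [ha''] at hcb
    rw [isConj_iff] at hca hcb
    obtain ⟨g, rfl⟩ := hca
    obtain ⟨h, rfl⟩ := hcb
    exact engel_conj_comm E a g h
  exact Subgroup.closure_induction₂ (p := fun x y _ _ => Commute x y)
    (fun x y hx hy => base x hx y hy)
    (fun x _ => Commute.one_left x) (fun x _ => Commute.one_right x)
    (fun x y z _ _ _ h1 h2 => h1.mul_left h2)
    (fun y z x _ _ _ h1 h2 => h1.mul_right h2)
    (fun x y _ _ h => h.inv_left) (fun x y _ _ h => h.inv_right) hx hy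

private lemma nc_conj_eq {a x y : G} (hx : x ∈ NCl a) (hy : y ∈ NCl a) :
    x * y * x⁻¹ = y :=
  conj_comm_eq (nc_comm E hy hx).symm

private lemma engel_inv_left' (u z : G) : ⁅u⁻¹, z⁆ = ⁅z,u⁆ := by
  have h := (engel_c1 E z u).eq
  calc ⁅u⁻¹,z⁆ = u⁻¹ * (⁅z,u⁆ * u) := by group
    _ = u⁻¹ * (u * ⁅z,u⁆) := by rw [h]
    _ = ⁅z,u⁆ := by group

private lemma engel_inv_left (u z : G) : ⁅u⁻¹, z⁆ = ⁅u,z⁆⁻¹ := by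
  rw [engel_inv_left' E, commutatorElement_inv]

private lemma engel_swap₁ (x y z : G) : ⁅⁅y,x⁆,z⁆ = ⁅⁅x,y⁆,z⁆⁻¹ := by
  rw [← commutatorElement_inv x y, engel_inv_left E]

private lemma engel_antisym (x y z : G) : ⁅⁅x,y⁆,z⁆ = ⁅⁅x,z⁆,y⁆⁻¹ := by
  have hu : ⁅x,y⁆ ∈ NCl x := nc_commR (nc_self x) y
  have hbx : ⁅x,z⁆ ∈ NCl x := nc_commR (nc_self x) z
  have hbz : ⁅x,z⁆ ∈ NCl z := nc_commL x (nc_self z)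
  have hPy : ⁅⁅x,y⁆,z⁆ ∈ NCl y := nc_commR (nc_commL x (nc_self y)) z
  have hQx : ⁅⁅x,z⁆,y⁆ ∈ NCl x := nc_commR hbx y
  have h_yb_y : ⁅y,⁅x,z⁆⁆ ∈ NCl y := nc_commR (nc_self y) _
  have h_yb_z : ⁅y,⁅x,z⁆⁆ ∈ NCl z := nc_commL y hbz
  have h_yb_x : ⁅y,⁅x,z⁆⁆ ∈ NCl x := nc_commL y hbx
  have hA : ⁅⁅x,y⁆, y*z⁆ = ⁅⁅x,y⁆,z⁆ := by
    rw [mulR, E x y, one_mul]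
    exact nc_conj_eq E (nc_self y) hPy
  have hB : ⁅y*⁅x,z⁆*y⁻¹, y*z⁆ = ⁅⁅x,z⁆,y⁆ := by
    have hv : y*⁅x,z⁆*y⁻¹ = ⁅y,⁅x,z⁆⁆ * ⁅x,z⁆ := by group
    have h2 : ⁅⁅x,z⁆, y*z⁆ = ⁅⁅x,z⁆,y⁆ := by
      rw [mulR, E x z]; simp
    have h3 : ⁅⁅y,⁅x,z⁆⁆, y*z⁆ = 1 := by
      rw [mulR]
      rw [commutatorElement_eq_one_iff_commute.mpr (nc_comm E h_yb_y (nc_self y))]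
      rw [commutatorElement_eq_one_iff_commute.mpr (nc_comm E h_yb_z (nc_self z))]
      simp
    rw [hv, mulL, h2, h3, mul_one]
    exact nc_conj_eq E h_yb_x hQx
  have h1 : (1:G) = ⁅⁅x,z⁆,y⁆ * ⁅⁅x,y⁆,z⁆ := by
    calc (1:G) = ⁅⁅x,y*z⁆, y*z⁆ := (E x (y*z)).symm
      _ = ⁅⁅x,y⁆ * (y*⁅x,z⁆*y⁻¹), y*z⁆ := by rw [mulR x y z]
      _ = ⁅x,y⁆ * ⁅y*⁅x,z⁆*y⁻¹, y*z⁆ * ⁅x,y⁆⁻¹ * ⁅⁅x,y⁆,y*z⁆ := mulL _ _ _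
      _ = ⁅x,y⁆ * ⁅⁅x,z⁆,y⁆ * ⁅x,y⁆⁻¹ * ⁅⁅x,y⁆,z⁆ := by rw [hA, hB]
      _ = ⁅⁅x,z⁆,y⁆ * ⁅⁅x,y⁆,z⁆ := by rw [nc_conj_eq E hu hQx]
  calc ⁅⁅x,y⁆,z⁆ = ⁅⁅x,z⁆,y⁆⁻¹ * (⁅⁅x,z⁆,y⁆ * ⁅⁅x,y⁆,z⁆) := by group
    _ = ⁅⁅x,z⁆,y⁆⁻¹ * 1 := by rw [← h1]
    _ = ⁅⁅x,z⁆,y⁆⁻¹ := mul_one _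

private lemma engel_cyc (x y z : G) : ⁅⁅x,y⁆,z⁆ = ⁅⁅z,x⁆,y⁆ := by
  rw [engel_antisym E x y z, engel_swap₁ E z x y, inv_inv]

private lemma engel_cube (x y z : G) :
    ⁅⁅x,y⁆,z⁆ * ⁅⁅x,y⁆,z⁆ * ⁅⁅x,y⁆,z⁆ = 1 := by
  have HW : (y * ⁅⁅y⁻¹,x⁆,z⁆ * y⁻¹) * (z * ⁅⁅z⁻¹,y⁆,x⁆ * z⁻¹) *
      (x * ⁅⁅x⁻¹,z⁆,y⁆ * x⁻¹) = 1 := by group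
  rw [engel_inv_left' E y x, engel_inv_left' E z y, engel_inv_left' E x z] at HW
  have m1 : ⁅⁅x,y⁆,z⁆ ∈ NCl y := nc_commR (nc_commL x (nc_self y)) z
  have m2 : ⁅⁅y,z⁆,x⁆ ∈ NCl z := nc_commR (nc_commL y (nc_self z)) x
  have m3 : ⁅⁅z,x⁆,y⁆ ∈ NCl x := nc_commR (nc_commL z (nc_self x)) y
  rw [nc_conj_eq E (nc_self y) m1, nc_conj_eq E (nc_self z) m2,
    nc_conj_eq E (nc_self x) m3] at HW
  have c1 : ⁅⁅y,z⁆,x⁆ = ⁅⁅x,y⁆,z⁆ := engel_cyc E y z x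
  have c2 : ⁅⁅z,x⁆,y⁆ = ⁅⁅y,z⁆,x⁆ := engel_cyc E z x y
  rw [c1, c2, c1] at HW
  exact HW

private lemma engel_pow3 (u w : G) : ⁅u,w⁆ * ⁅u,w⁆ * ⁅u,w⁆ = ⁅u*u*u, w⁆ := by
  have h2 : ⁅u*u,w⁆ = ⁅u,w⁆ * ⁅u,w⁆ := by
    rw [mulL u u w, conj_comm_eq (engel_c2 E u w).symm]
  have h3 : Commute (u*u) ⁅u,w⁆ :=
    ((engel_c2 E u w).mul_right (engel_c2 E u w)).symm
  rw [mulL (u*u) u w, conj_comm_eq h3, h2]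
  group

private lemma engel_four (x y z w : G) : ⁅⁅⁅x,y⁆,z⁆,w⁆ = 1 := by
  have swap23 : ∀ x' z' y' w' : G, ⁅⁅⁅x',z'⁆,y'⁆,w'⁆ = ⁅⁅⁅x',y'⁆,z'⁆,w'⁆⁻¹ := by
    intro x' z' y' w'
    rw [engel_antisym E x' z' y', engel_inv_left E]
  have swap12 : ∀ x' y' z' w' : G, ⁅⁅⁅y',x'⁆,z'⁆,w'⁆ = ⁅⁅⁅x',y'⁆,z'⁆,w'⁆⁻¹ := by
    intro x' y' z' w'
    rw [engel_swap₁ E x' y' z', engel_inv_left E]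
  have swap34 : ∀ x' y' z' w' : G, ⁅⁅⁅x',y'⁆,z'⁆,w'⁆ = ⁅⁅⁅x',y'⁆,w'⁆,z'⁆⁻¹ := by
    intro x' y' z' w'
    exact engel_antisym E ⁅x',y'⁆ z' w'
  have hchain : ⁅⁅⁅x,y⁆,z⁆,w⁆ = ⁅⁅⁅z,w⁆,x⁆,y⁆ := by
    calc ⁅⁅⁅x,y⁆,z⁆,w⁆ = ⁅⁅⁅x,z⁆,y⁆,w⁆⁻¹ := by rw [swap23 x z y w, inv_inv]
      _ = ⁅⁅⁅z,x⁆,y⁆,w⁆ := by rw [swap12 z x y w]; group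
      _ = ⁅⁅⁅z,x⁆,w⁆,y⁆⁻¹ := swap34 z x y w
      _ = ⁅⁅⁅z,w⁆,x⁆,y⁆ := by rw [swap23 z x w y]; group
  have e1 : ⁅⁅⁅x,y⁆,z⁆,w⁆ = ⁅⁅z,w⁆,⁅x,y⁆⁆ := by
    rw [engel_cyc E ⁅x,y⁆ z w, engel_cyc E w ⁅x,y⁆ z]
  have e2 : ⁅⁅⁅z,w⁆,x⁆,y⁆ = ⁅⁅x,y⁆,⁅z,w⁆⁆ := by
    rw [engel_cyc E ⁅z,w⁆ x y, engel_cyc E y ⁅z,w⁆ x]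
  have hDinv : ⁅⁅⁅x,y⁆,z⁆,w⁆ = ⁅⁅⁅x,y⁆,z⁆,w⁆⁻¹ := by
    calc ⁅⁅⁅x,y⁆,z⁆,w⁆ = ⁅⁅x,y⁆,⁅z,w⁆⁆ := by rw [hchain, e2]
      _ = ⁅⁅z,w⁆,⁅x,y⁆⁆⁻¹ := by rw [commutatorElement_inv]
      _ = ⁅⁅⁅x,y⁆,z⁆,w⁆⁻¹ := by rw [← e1]
  have hD2 : ⁅⁅⁅x,y⁆,z⁆,w⁆ * ⁅⁅⁅x,y⁆,z⁆,w⁆ = 1 := by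
    nth_rewrite 1 [hDinv]
    group
  have hD3 : ⁅⁅⁅x,y⁆,z⁆,w⁆ * ⁅⁅⁅x,y⁆,z⁆,w⁆ * ⁅⁅⁅x,y⁆,z⁆,w⁆ = 1 := by
    rw [engel_pow3 E ⁅⁅x,y⁆,z⁆ w, engel_cube E x y z]
    group
  calc ⁅⁅⁅x,y⁆,z⁆,w⁆
      = (⁅⁅⁅x,y⁆,z⁆,w⁆ * ⁅⁅⁅x,y⁆,z⁆,w⁆ * ⁅⁅⁅x,y⁆,z⁆,w⁆) *
        (⁅⁅⁅x,y⁆,z⁆,w⁆ * ⁅⁅⁅x,y⁆,z⁆,w⁆)⁻¹ := by group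
    _ = 1 := by rw [hD3, hD2]; group

end Engel

lemma engel_ucs {H : Type*} [Group H] (E : ∀ a b : H, ⁅⁅a,b⁆,b⁆ = 1) :
    upperCentralSeries H 3 = ⊤ := by
  rw [eq_top_iff]
  intro x _
  show x ∈ Subgroup.upperCentralSeries H 3
  rw [mem_upperCentralSeries_succ_iff]; intro y
  rw [mem_upperCentralSeries_succ_iff]; intro z
  rw [mem_upperCentralSeries_succ_iff]; intro w
  rw [upperCentralSeries_zero, Subgroup.mem_bot]
  show ⁅⁅⁅x,y⁆,z⁆,w⁆ = 1
  exact engel_four E x y z w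

/-- `C(G)` is nilpotent of class at most 3. -/
theorem stmt2 (G : Type*) [Group G] :
    upperCentralSeries (↥(normCent G)) 3 = ⊤ := by
  apply engel_ucs
  intro a b
  have ha := a.2
  simp only [normCent, Subgroup.mem_iInf] at ha
  have ha' := ha (b : G)
  rw [Subgroup.mem_normalizer_iff] at ha'
  have hb : (b:G) ∈ Subgroup.centralizer {(b:G)} :=
    Subgroup.mem_centralizer_singleton_iff.mpr rfl
  have h1 : (a:G)*(b:G)*(a:G)⁻¹ ∈ Subgroup.centralizer {(b:G)} := (ha' (b:G)).mp hb
  have hmem : ⁅(a:G),(b:G)⁆ ∈ Subgroup.centralizer {(b:G)} := by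
    have e : ⁅(a:G),(b:G)⁆ = ((a:G)*(b:G)*(a:G)⁻¹) * (b:G)⁻¹ := by group
    rw [e]; exact mul_mem h1 (inv_mem hb)
  have hc : Commute ⁅(a:G),(b:G)⁆ (b:G) :=
    Subgroup.mem_centralizer_singleton_iff.mp hmem
  apply Subtype.ext
  show ⁅⁅(a:G),(b:G)⁆,(b:G)⁆ = 1
  exact commutatorElement_eq_one_iff_commute.mpr hc
end

section
/- For any group G and any i ≥ 1, every element of C_i(G) is a right 2i-Engel element of G; that is, C_i(G) ⊆ R_{2i}(G). -/
/-- The ascending series of norms of centralizers, bundled with normality. -/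
def CSeriesAux (G : Type*) [Group G] : ℕ → {H : Subgroup G // H.Normal}
  | 0 => ⟨⊥, inferInstance⟩
  | (i+1) =>
    let p := CSeriesAux G i
    haveI := p.2
    ⟨(normCent (G ⧸ p.1)).comap (QuotientGroup.mk' p.1),
      Subgroup.Normal.comap (normCent_normal _) _⟩

/-- `CSeries G i` = `C_i(G)`: `C_0 = 1` and `C_{i+1}(G)/C_i(G) = C(G/C_i(G))`. -/
def CSeries (G : Type*) [Group G] (n : ℕ) : Subgroup G := (CSeriesAux G n).1

instance CSeries_normal (G : Type*) [Group G] (n : ℕ) : (CSeries G n).Normal :=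
  (CSeriesAux G n).2

open scoped commutatorElement

/-- Iterated commutator `[x,_n y]`: `[x,_0 y] = x`, `[x,_{m+1} y] = [[x,_m y], y]`. -/
def engelComm {G : Type*} [Group G] (x y : G) : ℕ → G
  | 0 => x
  | n + 1 => ⁅engelComm x y n, y⁆

lemma engelComm_add {G : Type*} [Group G] (x y : G) (m n : ℕ) :
    engelComm x y (m + n) = engelComm (engelComm x y m) y n := by
  induction n with
  | zero => rfl
  | succ n ih =>
    show ⁅engelComm x y (m + n), y⁆ = ⁅engelComm (engelComm x y m) y n, y⁆
    rw [ih]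

lemma normCent_engel {G : Type*} [Group G] {z : G} (hz : z ∈ normCent G) (w : G) :
    ⁅⁅z, w⁆, w⁆ = 1 := by
  simp only [normCent, Subgroup.mem_iInf] at hz
  have h := (Subgroup.mem_normalizer_iff.mp (hz w) w).mp ?_
  · rw [Subgroup.mem_centralizer_singleton_iff] at h
    rw [commutatorElement_eq_one_iff_mul_comm, commutatorElement_def]
    calc (z * w * z⁻¹ * w⁻¹) * w = z * w * z⁻¹ := by group
      _ = (w * (z * w * z⁻¹)) * w⁻¹ := by rw [← h]; group
      _ = w * (z * w * z⁻¹ * w⁻¹) := by group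
  · rw [Subgroup.mem_centralizer_singleton_iff]

lemma CSeries_succ_mem {G : Type*} [Group G] {i : ℕ} {x : G} (hx : x ∈ CSeries G (i + 1)) :
    (QuotientGroup.mk' (CSeries G i)) x ∈ normCent (G ⧸ CSeries G i) := hx

/-- For `i ≥ 1`, every element of `C_i(G)` is a right `2i`-Engel element of `G`. -/
theorem stmt7 (G : Type*) [Group G] (i : ℕ) (hi : 1 ≤ i) :
    ∀ x ∈ CSeries G i, ∀ y : G, engelComm x y (2 * i) = 1 := by
  clear hi
  induction i with
  | zero =>
    intro x hx y
    have : x = 1 := by simpa [CSeries, CSeriesAux, Subgroup.mem_bot] using hx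
    simpa [engelComm] using this
  | succ i ih =>
    intro x hx y
    have h1 : ⁅⁅(QuotientGroup.mk' (CSeries G i)) x, (QuotientGroup.mk' (CSeries G i)) y⁆,
        (QuotientGroup.mk' (CSeries G i)) y⁆ = 1 :=
      normCent_engel (CSeries_succ_mem hx) _
    rw [← map_commutatorElement, ← map_commutatorElement] at h1
    have h2 : ⁅⁅x, y⁆, y⁆ ∈ CSeries G i := by
      rwa [← QuotientGroup.eq_one_iff ⁅⁅x, y⁆, y⁆]
    have h3 := ih ⁅⁅x, y⁆, y⁆ h2 y
    have h4 : 2 * (i + 1) = 2 + 2 * i := by ring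
    rw [h4, engelComm_add]
    exact h3
end

section
/- A finitely generated group G is nilpotent if and only if G/C(G) is nilpotent, where C(G) = ⋂_{a∈G} N_G(C_G(a)). -/
instance (G : Type*) [Group G] : (normCent G).Normal := normCent_normal G

section facts
variable {G : Type*} [Group G]

theorem normCent.conj_comm {c g : G} (hc : c ∈ normCent G) : Commute (c * g * c⁻¹) g := by
  have h := Subgroup.mem_iInf.mp hc g
  have := (Subgroup.mem_normalizer_iff.mp h g).mp (Subgroup.mem_centralizer_singleton_iff.mpr rfl)
  exact Subgroup.mem_centralizer_singleton_iff.mp this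

end facts

section facts2
variable {G : Type*} [Group G]

theorem normCent.comm_v {a g : G} (ha : a ∈ normCent G) :
    Commute (g * a * g⁻¹ * a⁻¹) g := by
  have h1 : Commute (a * g * a⁻¹ * g⁻¹) g :=
    Commute.mul_left (normCent.conj_comm ha) (Commute.refl g).inv_left
  have h2 := h1.inv_left
  have e : (a * g * a⁻¹ * g⁻¹)⁻¹ = g * a * g⁻¹ * a⁻¹ := by group
  rwa [e] at h2

theorem normCent.comm_D {c h : G} (hc : c ∈ normCent G) :
    Commute (c⁻¹ * h⁻¹ * c * h) h := by
  have h1 : Commute (c⁻¹ * h⁻¹ * c) h⁻¹ := by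
    have := normCent.conj_comm (inv_mem hc) (g := h⁻¹)
    rwa [inv_inv] at this
  have h2 : Commute (c⁻¹ * h⁻¹ * c) h := by
    have := h1.inv_right; rwa [inv_inv] at this
  exact h2.mul_left (Commute.refl h)

theorem normCent.comm_conj {c : G} (hc : c ∈ normCent G) (g : G) :
    Commute c (g * c * g⁻¹) := by
  have key : ∀ w : G, Commute c (w⁻¹ * c * w) := by
    intro w
    have hu_g : Commute (c⁻¹ * w⁻¹ * c * w) w := normCent.comm_D hc
    have hu_cg' : Commute (c⁻¹ * (c * w)⁻¹ * c * (c * w)) (c * w) := normCent.comm_D hc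
    have e1 : c⁻¹ * (c * w)⁻¹ * c * (c * w) = c⁻¹ * w⁻¹ * c * w := by group
    rw [e1] at hu_cg'
    have hu_c : Commute (c⁻¹ * w⁻¹ * c * w) c := by
      have h3 := hu_cg'.mul_right hu_g.inv_right
      have e2 : c * w * w⁻¹ = c := by group
      rwa [e2] at h3
    have h4 := (Commute.refl c).mul_right hu_c.symm
    have e3 : c * (c⁻¹ * w⁻¹ * c * w) = w⁻¹ * c * w := by group
    rwa [e3] at h4
  have := key g⁻¹
  rwa [inv_inv] at this

theorem normCent.conj_conj_comm {c : G} (hc : c ∈ normCent G) (g h : G) :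
    Commute (g * c * g⁻¹) (h * c * h⁻¹) := by
  have h1 : Commute c ((g⁻¹ * h) * c * (g⁻¹ * h)⁻¹) := normCent.comm_conj hc _
  have h2 := h1.map (MulAut.conj g).toMonoidHom
  simp only [MulAut.conj_apply, MulEquiv.coe_toMonoidHom] at h2
  have e1 : g * ((g⁻¹ * h) * c * (g⁻¹ * h)⁻¹) * g⁻¹ = h * c * h⁻¹ := by group
  rwa [e1] at h2

end facts2

open Subgroup in
theorem isNilpotent_of_quotient_ucs :
    ∀ (m : ℕ) (G : Type*) [Group G],
      Group.IsNilpotent (G ⧸ Subgroup.upperCentralSeries G m) → Group.IsNilpotent G := by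
  intro m
  induction m with
  | zero =>
    intro G _ h
    haveI : Group.IsNilpotent (G ⧸ (⊥ : Subgroup G)) := h
    exact nilpotent_of_mulEquiv (QuotientGroup.quotientBot (G := G))
  | succ m ih =>
    intro G _ h
    set H := G ⧸ Subgroup.center G with hH
    have hmap : Subgroup.map (QuotientGroup.mk' (Subgroup.center G))
        (Subgroup.upperCentralSeries G (m + 1)) = Subgroup.upperCentralSeries H m := by
      rw [← Subgroup.comap_upperCentralSeries_quotient_center m,
        Subgroup.map_comap_eq_self_of_surjective (QuotientGroup.mk'_surjective _)]
    have hle : Subgroup.center G ≤ Subgroup.upperCentralSeries G (m + 1) := by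
      rw [← Subgroup.upperCentralSeries_one]
      exact Subgroup.upperCentralSeries_mono G (by omega)
    have equiv := QuotientGroup.quotientQuotientEquivQuotient
      (Subgroup.center G) (Subgroup.upperCentralSeries G (m + 1)) hle
    have equiv' := (QuotientGroup.quotientMulEquivOfEq hmap.symm).trans equiv
    have : Group.IsNilpotent (H ⧸ Subgroup.upperCentralSeries H m) :=
      haveI := h
      nilpotent_of_mulEquiv equiv'.symm
    exact of_quotient_center_nilpotent (ih H this)


section ringaux
variable {R : Type*} [Ring R]

lemma aux_expand (a b : R) (ha : a * a = 0) (hb : b * b = 0)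
    (hs : (a + b + a * b) * (a + b + a * b) = 0) :
    a * b + b * a + b * a * b + a * b * a + a * b * a * b = 0 := by
  have hexp : (a + b + a * b) * (a + b + a * b) =
      a * a + a * b + a * a * b + b * a + b * b + b * a * b + a * b * a + a * (b * b) +
        a * b * a * b := by noncomm_ring
  rw [ha, hb] at hexp
  simp only [zero_mul, mul_zero, zero_add, add_zero] at hexp
  rw [hexp] at hs
  exact hs

lemma aux_aba (a b binv : R) (ha : a * a = 0) (hb : b * b = 0)
    (hs : (a + b + a * b) * (a + b + a * b) = 0)
    (hbinv : (1 + b) * binv = 1) : a * b * a = 0 := by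
  have h1 := aux_expand a b ha hb hs
  have h2 : a * (a * b + b * a + b * a * b + a * b * a + a * b * a * b) =
      a * a * b + a * b * a + a * b * a * b + a * a * (b * a) + a * a * (b * a * b) := by
    noncomm_ring
  rw [h1, mul_zero, ha] at h2
  simp only [zero_mul, mul_zero, zero_add, add_zero] at h2
  -- h2 : 0 = a * b * a + a * b * a * b
  have h3 : a * b * a * (1 + b) = a * b * a + a * b * a * b := by noncomm_ring
  rw [← h2] at h3
  have h4 : a * b * a * ((1 + b) * binv) = 0 := by
    rw [← mul_assoc, h3, zero_mul]
  rw [hbinv, mul_one] at h4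
  exact h4

lemma aux_anti (a b : R) (ha : a * a = 0) (hb : b * b = 0)
    (hs : (a + b + a * b) * (a + b + a * b) = 0)
    (haba : a * b * a = 0) (hbab : b * a * b = 0) : a * b = -(b * a) := by
  have h1 := aux_expand a b ha hb hs
  rw [haba, hbab] at h1
  simp only [mul_zero, add_zero, zero_add, zero_mul] at h1
  exact eq_neg_of_add_eq_zero_left h1

end ringaux

section monomials
open Pointwise
variable {R : Type*} [Ring R]

def MonSet (T : Set R) (j : ℕ) : Set R :=
  {f | ∃ L : List R, (∀ u ∈ L, u ∈ T) ∧ j ≤ L.length ∧ f = L.prod}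

lemma one_mem_monSet (T : Set R) : (1 : R) ∈ MonSet T 0 :=
  ⟨[], by simp, by simp, by simp⟩

lemma monSet_mono (T : Set R) {i j : ℕ} (h : i ≤ j) : MonSet T j ⊆ MonSet T i := by
  rintro f ⟨L, hL, hlen, rfl⟩
  exact ⟨L, hL, le_trans h hlen, rfl⟩

lemma monSet_mul_subset (T : Set R) (i j : ℕ) :
    MonSet T i * MonSet T j ⊆ MonSet T (i + j) := by
  rintro x hx
  rw [Set.mem_mul] at hx
  obtain ⟨f, ⟨L1, hL1, hlen1, rfl⟩, g, ⟨L2, hL2, hlen2, rfl⟩, rfl⟩ := hx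
  refine ⟨L1 ++ L2, ?_, ?_, ?_⟩
  · intro u hu; rcases List.mem_append.mp hu with h | h
    · exact hL1 u h
    · exact hL2 u h
  · rw [List.length_append]; omega
  · rw [List.prod_append]

lemma W_mul {T : Set R} {i j : ℕ} {f g : R}
    (hf : f ∈ Submodule.span ℤ (MonSet T i)) (hg : g ∈ Submodule.span ℤ (MonSet T j)) :
    f * g ∈ Submodule.span ℤ (MonSet T (i + j)) := by
  have h1 := Submodule.mul_mem_mul hf hg
  rw [Submodule.span_mul_span] at h1
  exact Submodule.span_mono (monSet_mul_subset T i j) h1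

lemma W_mono {T : Set R} {i j : ℕ} (h : i ≤ j) :
    Submodule.span ℤ (MonSet T j) ≤ Submodule.span ℤ (MonSet T i) :=
  Submodule.span_mono (monSet_mono T h)

variable {T : Set R} (hTsq : ∀ u ∈ T, u * u = 0)
  (hTanti : ∀ u ∈ T, ∀ v ∈ T, u * v = -(v * u))

include hTsq hTanti in
lemma mul_prod_zero_of_mem : ∀ L : List R, (∀ w ∈ L, w ∈ T) → ∀ u ∈ T, u ∈ L → u * L.prod = 0 := by
  intro L
  induction L with
  | nil => intro _ u _ hu; simp at hu
  | cons v t ih =>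
    intro hw u hu hmem
    rw [List.prod_cons, ← mul_assoc]
    rcases List.mem_cons.mp hmem with rfl | hmem'
    · rw [hTsq u hu, zero_mul]
    · have hv : v ∈ T := hw v (List.mem_cons_self)
      rw [hTanti u hu v hv, neg_mul, mul_assoc,
        ih (fun w hw' => hw w (List.mem_cons_of_mem v hw')) u hu hmem', mul_zero, neg_zero]

include hTsq hTanti in
lemma prod_zero_of_not_nodup : ∀ L : List R, (∀ w ∈ L, w ∈ T) → ¬L.Nodup → L.prod = 0 := by
  intro L
  induction L with
  | nil => intro _ h; exact absurd List.nodup_nil h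
  | cons v t ih =>
    intro hw hnd
    rw [List.nodup_cons] at hnd
    push_neg at hnd
    rw [List.prod_cons]
    by_cases hvt : v ∈ t
    · exact mul_prod_zero_of_mem hTsq hTanti t
        (fun w hw' => hw w (List.mem_cons_of_mem v hw')) v (hw v (List.mem_cons_self)) hvt
    · rw [ih (fun w hw' => hw w (List.mem_cons_of_mem v hw')) (hnd hvt), mul_zero]

include hTsq hTanti in
lemma monSet_eq_zero {k : ℕ}
    (hbound : ∀ L : List R, (∀ w ∈ L, w ∈ T) → L.Nodup → L.length ≤ k) :
    ∀ f ∈ MonSet T (k + 1), f = 0 := by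
  rintro f ⟨L, hL, hlen, rfl⟩
  apply prod_zero_of_not_nodup hTsq hTanti L hL
  intro hnd
  have := hbound L hL hnd
  omega

include hTsq hTanti in
lemma span_monSet_eq_bot {k : ℕ}
    (hbound : ∀ L : List R, (∀ w ∈ L, w ∈ T) → L.Nodup → L.length ≤ k) :
    Submodule.span ℤ (MonSet T (k + 1)) = ⊥ := by
  rw [eq_bot_iff, Submodule.span_le]
  intro f hf
  rw [SetLike.mem_coe, Submodule.mem_bot]
  exact monSet_eq_zero hTsq hTanti hbound f hf

end monomials

open scoped IsMulCommutative

section endring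
variable {G : Type*} [Group G] (A : Subgroup G) [hN : A.Normal] [hComm : IsMulCommutative ↥A]

/-- Conjugation by `g` as an additive endomorphism of `Additive ↥A`. -/
def conjAdd (g : G) : Additive ↥A →+ Additive ↥A :=
  AddMonoidHom.mk' (fun a => Additive.ofMul
    (⟨g * (↑a.toMul : G) * g⁻¹, hN.conj_mem _ a.toMul.2 g⟩ : ↥A))
    (by
      intro a b
      apply Additive.toMul.injective
      apply Subtype.ext
      push_cast
      simp only [toMul_ofMul, toMul_add]
      push_cast
      group)

omit hComm in
lemma conjAdd_coe (g : G) (a : Additive ↥A) :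
    ((((conjAdd A g) a).toMul : ↥A) : G) = g * (↑a.toMul : G) * g⁻¹ := rfl

def eE (g : G) : Module.End ℤ (Additive ↥A) := (conjAdd A g).toIntLinearMap

lemma eE_coe (g : G) (a : Additive ↥A) :
    ((((eE A g) a).toMul : ↥A) : G) = g * (↑a.toMul : G) * g⁻¹ := rfl

lemma eE_mul (g h : G) : eE A (g * h) = eE A g * eE A h := by
  apply LinearMap.ext
  intro a
  rw [Module.End.mul_apply]
  apply Additive.toMul.injective
  apply Subtype.ext
  rw [eE_coe, eE_coe, eE_coe]
  group

lemma eE_one : eE A 1 = 1 := by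
  apply LinearMap.ext
  intro a
  apply Additive.toMul.injective
  apply Subtype.ext
  rw [eE_coe, Module.End.one_apply]
  group

def alE (g : G) : Module.End ℤ (Additive ↥A) := eE A g - 1

lemma alE_coe (g : G) (a : Additive ↥A) :
    ((((alE A g) a).toMul : ↥A) : G) = g * (↑a.toMul : G) * g⁻¹ * (↑a.toMul : G)⁻¹ := by
  show ((((eE A g - 1) a).toMul : ↥A) : G) = _
  rw [LinearMap.sub_apply]
  rw [toMul_sub]
  push_cast
  rw [div_eq_mul_inv]
  rw [eE_coe, Module.End.one_apply]

end endring

section endring2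
variable {G : Type*} [Group G] (A : Subgroup G) [hN : A.Normal] [hComm : IsMulCommutative ↥A]

lemma alE_mul_formula (x y : G) :
    alE A (x * y) = alE A x + alE A y + alE A x * alE A y := by
  unfold alE
  rw [eE_mul]
  noncomm_ring

variable (h2E : ∀ (a : ↥A) (g : G), Commute (g * (a : G) * g⁻¹ * (a : G)⁻¹) g)

include h2E in
lemma alE_sq (g : G) : alE A g * alE A g = 0 := by
  apply LinearMap.ext
  intro a
  rw [Module.End.mul_apply, LinearMap.zero_apply]
  set b := (alE A g) a with hb
  have hcoe : ((b.toMul : ↥A) : G) = g * (↑a.toMul : G) * g⁻¹ * (↑a.toMul : G)⁻¹ := alE_coe A g a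
  have h2 : (((alE A g b).toMul : ↥A) : G) = 1 := by
    rw [alE_coe, hcoe]
    have hc := h2E a.toMul g
    rw [Commute] at hc
    rw [SemiconjBy] at hc
    -- hc : (g * a * g⁻¹ * a⁻¹) * g = g * (g * a * g⁻¹ * a⁻¹)
    have : g * (g * (↑a.toMul : G) * g⁻¹ * (↑a.toMul : G)⁻¹) * g⁻¹
        = g * (↑a.toMul : G) * g⁻¹ * (↑a.toMul : G)⁻¹ := by
      rw [← hc]; group
    rw [this]
    group
  apply Additive.toMul.injective
  apply Subtype.ext
  rw [h2]
  rfl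

include h2E in
lemma eE_inv (x : G) : eE A x⁻¹ = 1 - alE A x := by
  have h1 : eE A x * eE A x⁻¹ = 1 := by rw [← eE_mul, mul_inv_cancel, eE_one]
  have h2 : eE A x * (1 - alE A x) = 1 := by
    have hsq := alE_sq A h2E x
    unfold alE at hsq ⊢
    linear_combination (norm := noncomm_ring) -hsq
  have h3 : eE A x⁻¹ * (eE A x * eE A x⁻¹) = eE A x⁻¹ * (eE A x * (1 - alE A x)) := by
    rw [h1, h2]
  rw [← mul_assoc, ← mul_assoc, ← eE_mul, inv_mul_cancel, eE_one, one_mul, one_mul] at h3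
  exact h3

include h2E in
lemma alE_inv (x : G) : alE A x⁻¹ = -alE A x := by
  rw [show alE A x⁻¹ = eE A x⁻¹ - 1 from rfl, eE_inv A h2E]
  unfold alE
  abel

include h2E in
lemma alE_aba (x y : G) : alE A x * alE A y * alE A x = 0 := by
  apply aux_aba _ _ (eE A y⁻¹) (alE_sq A h2E x) (alE_sq A h2E y)
  · rw [← alE_mul_formula]; exact alE_sq A h2E (x * y)
  · have : (1 : Module.End ℤ (Additive ↥A)) + alE A y = eE A y := by unfold alE; noncomm_ring
    rw [this, ← eE_mul, mul_inv_cancel, eE_one]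

include h2E in
lemma alE_anti (x y : G) : alE A x * alE A y = -(alE A y * alE A x) := by
  apply aux_anti _ _ (alE_sq A h2E x) (alE_sq A h2E y)
  · rw [← alE_mul_formula]; exact alE_sq A h2E (x * y)
  · exact alE_aba A h2E x y
  · exact alE_aba A h2E y x

end endring2

section endring3
variable {G : Type*} [Group G] (A : Subgroup G) [hN : A.Normal] [hComm : IsMulCommutative ↥A]
variable (h2E : ∀ (a : ↥A) (g : G), Commute (g * (a : G) * g⁻¹ * (a : G)⁻¹) g)
variable (S : Finset G) (hS : Subgroup.closure (↑S : Set G) = ⊤)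

/-- The set of generator endomorphisms. -/
def Tgen : Set (Module.End ℤ (Additive ↥A)) := (fun s => alE A s) '' (↑S : Set G)

include h2E hS in
lemma alE_mem_W1 (x : G) :
    alE A x ∈ Submodule.span ℤ (MonSet (Tgen A S) 1) := by
  have hx : x ∈ Subgroup.closure (↑S : Set G) := by rw [hS]; trivial
  induction hx using Subgroup.closure_induction with
  | mem s hs =>
    apply Submodule.subset_span
    exact ⟨[alE A s], by
      intro u hu
      rw [List.mem_singleton] at hu
      exact hu ▸ ⟨s, hs, rfl⟩, by simp, by simp⟩
  | one =>
    have : alE A (1 : G) = 0 := by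
      unfold alE; rw [eE_one]; abel
    rw [this]; exact zero_mem _
  | mul x y hx hy ihx ihy =>
    rw [alE_mul_formula]
    exact add_mem (add_mem ihx ihy) (W_mono (by omega) (W_mul ihx ihy))
  | inv x hx ihx =>
    rw [alE_inv A h2E]
    exact neg_mem ihx

include h2E hS in
lemma prod_map_alE_mem (L : List G) :
    ((L.map (alE A)).prod) ∈ Submodule.span ℤ (MonSet (Tgen A S) L.length) := by
  induction L with
  | nil =>
    simp only [List.map_nil, List.prod_nil, List.length_nil]
    exact Submodule.subset_span (one_mem_monSet _)
  | cons x t ih =>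
    simp only [List.map_cons, List.prod_cons, List.length_cons]
    have := W_mul (alE_mem_W1 A h2E S hS x) ih
    rwa [add_comm] at this

include h2E in
lemma Tgen_sq : ∀ u ∈ Tgen A S, u * u = 0 := by
  rintro u ⟨s, _, rfl⟩; exact alE_sq A h2E s

include h2E in
lemma Tgen_anti : ∀ u ∈ Tgen A S, ∀ v ∈ Tgen A S, u * v = -(v * u) := by
  rintro u ⟨s, _, rfl⟩ v ⟨t, _, rfl⟩; exact alE_anti A h2E s t

lemma Tgen_bound :
    ∀ L : List (Module.End ℤ (Additive ↥A)), (∀ w ∈ L, w ∈ Tgen A S) → L.Nodup →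
      L.length ≤ S.card := by
  classical
  intro L hL hnd
  have h1 : L.toFinset ⊆ S.image (fun s => alE A s) := by
    intro u hu
    rw [List.mem_toFinset] at hu
    obtain ⟨s, hs, rfl⟩ := hL u hu
    exact Finset.mem_image_of_mem _ hs
  calc L.length = L.toFinset.card := (List.toFinset_card_of_nodup hnd).symm
    _ ≤ (S.image (fun s => alE A s)).card := Finset.card_le_card h1
    _ ≤ S.card := Finset.card_image_le

include h2E hS in
lemma prod_map_alE_vanish (L : List G) (hlen : L.length = S.card + 1) :
    ((L.map (alE A)).prod) = 0 := by
  have h1 := prod_map_alE_mem A h2E S hS L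
  rw [hlen, span_monSet_eq_bot (Tgen_sq A h2E S) (Tgen_anti A h2E S) (Tgen_bound A S)] at h1
  exact (Submodule.mem_bot ℤ).mp h1

lemma mem_ucs_of_alE_prod :
    ∀ (j : ℕ) (a : ↥A),
      (∀ L : List G, L.length = j → ((L.map (alE A)).prod) (Additive.ofMul a) = 0) →
        (a : G) ∈ Subgroup.upperCentralSeries G j := by
  intro j
  induction j with
  | zero =>
    intro a ha
    have h0 := ha [] rfl
    simp only [List.map_nil, List.prod_nil, Module.End.one_apply] at h0
    have : a = (1 : ↥A) := by
      have := congrArg Additive.toMul h0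
      simpa using this
    rw [Subgroup.upperCentralSeries_zero, Subgroup.mem_bot, this]; rfl
  | succ j ih =>
    intro a ha
    rw [Subgroup.mem_upperCentralSeries_succ_iff]
    intro g
    set v : ↥A := ((alE A g) (Additive.ofMul a)).toMul with hv
    have hva : ∀ L : List G, L.length = j → ((L.map (alE A)).prod) (Additive.ofMul v) = 0 := by
      intro L hL
      have : Additive.ofMul v = (alE A g) (Additive.ofMul a) := by simp [hv]
      rw [this]
      have happ := ha (L ++ [g]) (by simp [hL])
      rw [List.map_append, List.prod_append, List.map_singleton, List.prod_singleton,
        Module.End.mul_apply] at happ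
      exact happ
    have hvZ : (v : G) ∈ Subgroup.upperCentralSeries G j := ih v hva
    have hcoe : (v : G) = g * (a : G) * g⁻¹ * (a : G)⁻¹ := alE_coe A g (Additive.ofMul a)
    have : (a : G) * g * (a : G)⁻¹ * g⁻¹ = ((v : G))⁻¹ := by
      rw [hcoe]; group
    rw [commutatorElement_def, this]
    exact inv_mem hvZ

end endring3

theorem normCent_mem_ucs {G : Type*} [Group G] (S : Finset G)
    (hS : Subgroup.closure (↑S : Set G) = ⊤) {c : G} (hc : c ∈ normCent G) :
    c ∈ Subgroup.upperCentralSeries G (S.card + 1) := by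
  set A : Subgroup G := Subgroup.normalClosure {c} with hA
  have hA_le : A ≤ normCent G := by
    exact Subgroup.normalClosure_le_normal (by
      intro x hx
      rw [Set.mem_singleton_iff] at hx
      exact hx ▸ hc)
  have hgen_comm : ∀ x ∈ Group.conjugatesOfSet ({c} : Set G),
      ∀ y ∈ Group.conjugatesOfSet ({c} : Set G), Commute x y := by
    intro x hx y hy
    rw [Group.mem_conjugatesOfSet_iff] at hx hy
    obtain ⟨a, ha, hax⟩ := hx
    obtain ⟨b, hb, hby⟩ := hy
    rw [Set.mem_singleton_iff] at ha hb
    subst ha; subst hb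
    obtain ⟨g, rfl⟩ := isConj_iff.mp hax
    obtain ⟨h, rfl⟩ := isConj_iff.mp hby
    exact normCent.conj_conj_comm hc g h
  haveI hANormal : A.Normal := Subgroup.normalClosure_normal
  haveI hAComm : IsMulCommutative ↥A := by
    constructor
    constructor
    rintro ⟨x, hx⟩ ⟨y, hy⟩
    apply Subtype.ext
    show x * y = y * x
    have hx' : x ∈ Subgroup.closure (Group.conjugatesOfSet ({c} : Set G)) := hx
    have hy' : y ∈ Subgroup.closure (Group.conjugatesOfSet ({c} : Set G)) := hy
    refine Subgroup.closure_induction₂ (p := fun x y _ _ => Commute x y)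
      ?_ ?_ ?_ ?_ ?_ ?_ ?_ hx' hy'
    · exact fun x y hx hy => hgen_comm x hx y hy
    · intro x _; exact Commute.one_left x
    · intro x _; exact Commute.one_right x
    · intro x y z _ _ _ h1 h2; exact h1.mul_left h2
    · intro y z x _ _ _ h1 h2; exact h1.mul_right h2
    · intro x y _ _ h; exact h.inv_left
    · intro x y _ _ h; exact h.inv_right
  have h2E : ∀ (a : ↥A) (g : G), Commute (g * (a : G) * g⁻¹ * (a : G)⁻¹) g :=
    fun a g => normCent.comm_v (hA_le a.2)
  have hcA : c ∈ A := Subgroup.subset_normalClosure (Set.mem_singleton c)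
  apply mem_ucs_of_alE_prod A (S.card + 1) ⟨c, hcA⟩
  intro L hL
  rw [prod_map_alE_vanish A h2E S hS L hL]
  rfl

/-- A finitely generated group `G` is nilpotent iff `G/C(G)` is nilpotent. -/
theorem stmt9 (G : Type*) [Group G] (hFG : Group.FG G) :
    Group.IsNilpotent G ↔ Group.IsNilpotent (G ⧸ normCent G) := by
  constructor
  · intro h
    haveI := h
    exact nilpotent_quotient_of_nilpotent (normCent G)
  · intro h
    obtain ⟨n, S, -, hS⟩ := Group.fg_iff'.mp hFG
    have hle : normCent G ≤ Subgroup.upperCentralSeries G (S.card + 1) :=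
      fun c hc => normCent_mem_ucs S hS hc
    have hle' : normCent G ≤ Subgroup.comap (MonoidHom.id G)
        (Subgroup.upperCentralSeries G (S.card + 1)) := by
      simpa using hle
    have hsurj : Function.Surjective
        (QuotientGroup.map (normCent G) (Subgroup.upperCentralSeries G (S.card + 1))
          (MonoidHom.id G) hle') := by
      intro x
      obtain ⟨y, rfl⟩ := QuotientGroup.mk_surjective x
      exact ⟨QuotientGroup.mk y, rfl⟩
    haveI := h
    haveI : Group.IsNilpotent (G ⧸ Subgroup.upperCentralSeries G (S.card + 1)) :=
      nilpotent_of_surjective _ hsurj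
    exact isNilpotent_of_quotient_ucs (S.card + 1) G this
end

section
/- If G is a group such that G/C(G) is nilpotent, then every cyclic subgroup of G is subnormal in G (i.e., G is a Baer group). -/
open scoped Pointwise


/-- A subgroup is subnormal if it is connected to the whole group by a finite chain
of successive normal inclusions. -/
def IsSubnormal {G : Type*} [Group G] (H : Subgroup G) : Prop :=
  ∃ (n : ℕ) (c : ℕ → Subgroup G), c 0 = H ∧ c n = ⊤ ∧
    ∀ i < n, c i ≤ c (i + 1) ∧ ∀ g ∈ c (i + 1), ∀ h ∈ c i, g * h * g⁻¹ ∈ c i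

lemma isSubnormal_step {G : Type*} [Group G] {H K : Subgroup G} (hHK : H ≤ K)
    (hnorm : ∀ g ∈ K, ∀ h ∈ H, g * h * g⁻¹ ∈ H) (hK : IsSubnormal K) : IsSubnormal H := by
  obtain ⟨n, c, h0, hn, hstep⟩ := hK
  refine ⟨n + 1, fun i => match i with | 0 => H | (i+1) => c i, rfl, hn, ?_⟩
  intro i hi
  match i with
  | 0 =>
    show H ≤ c 0 ∧ ∀ g ∈ c 0, ∀ h ∈ H, g * h * g⁻¹ ∈ H
    rw [h0]; exact ⟨hHK, hnorm⟩
  | (i+1) => exact hstep i (by omega)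

lemma isSubnormal_comap {G H : Type*} [Group G] [Group H] (f : G →* H) {K : Subgroup H}
    (hK : IsSubnormal K) : IsSubnormal (K.comap f) := by
  obtain ⟨n, c, h0, hn, hstep⟩ := hK
  refine ⟨n, fun i => (c i).comap f, by simp only [h0], by simp only [hn]; exact Subgroup.comap_top f, ?_⟩
  intro i hi
  obtain ⟨hle, hconj⟩ := hstep i hi
  refine ⟨Subgroup.comap_mono hle, fun g hg h hh => ?_⟩
  simp only [Subgroup.mem_comap, map_mul, map_inv] at *
  exact hconj _ hg _ hh

lemma isSubnormal_of_nilpotent {G : Type*} [Group G] (h : Group.IsNilpotent G)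
    (H : Subgroup G) : IsSubnormal H := by
  obtain ⟨n, hn⟩ := h.nilpotent'
  refine ⟨n, fun i => H ⊔ Subgroup.upperCentralSeries G i, by simp, by simp only [hn]; simp, ?_⟩
  intro i _
  have key : ∀ z ∈ Subgroup.upperCentralSeries G (i + 1), ∀ s ∈ H ⊔ Subgroup.upperCentralSeries G i,
      z * s * z⁻¹ ∈ H ⊔ Subgroup.upperCentralSeries G i := by
    intro z hz s hs
    have : (s : G) ∈ (H : Set G) * (Subgroup.upperCentralSeries G i : Set G) := by
      rw [← Subgroup.mul_normal]; exact hs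
    obtain ⟨a, ha, b, hb, rfl⟩ := this
    have hc : z * a * z⁻¹ * a⁻¹ ∈ Subgroup.upperCentralSeries G i :=
      (Subgroup.mem_upperCentralSeries_succ_iff).mp hz a
    have hb' : z * b * z⁻¹ ∈ Subgroup.upperCentralSeries G i :=
      (inferInstance : (Subgroup.upperCentralSeries G i).Normal).conj_mem b hb z
    have : z * (a * b) * z⁻¹ = (z * a * z⁻¹ * a⁻¹) * a * (z * b * z⁻¹) := by group
    rw [this]
    exact mul_mem (mul_mem (Subgroup.mem_sup_right hc) (Subgroup.mem_sup_left ha))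
      (Subgroup.mem_sup_right hb')
  have hle : H ⊔ Subgroup.upperCentralSeries G (i + 1) ≤ Subgroup.normalizer ((H ⊔ Subgroup.upperCentralSeries G i : Subgroup G) : Set G) := by
    refine sup_le (le_trans le_sup_left Subgroup.le_normalizer) ?_
    intro z hz
    rw [Subgroup.mem_normalizer_iff]
    intro s
    constructor
    · exact fun hs => key z hz s hs
    · intro hs
      have := key z⁻¹ (inv_mem hz) _ hs
      simpa [mul_assoc] using this
  exact ⟨sup_le_sup_left (Subgroup.upperCentralSeries_mono G (Nat.le_succ i)) H,
    fun g hg s hs => Subgroup.mem_normalizer_iff.mp (hle hg) s |>.mp hs⟩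

/-- If `G/C(G)` is nilpotent then every cyclic subgroup of `G` is subnormal. -/
theorem stmt10 (G : Type*) [Group G] (h : Group.IsNilpotent (G ⧸ normCent G)) :
    ∀ x : G, IsSubnormal (Subgroup.zpowers x) := by
  intro x
  set C := Subgroup.centralizer ({x} : Set G) with hC
  set N := Subgroup.normalizer (C : Set G) with hN
  -- N is subnormal: it contains normCent G and corresponds to a subgroup of the quotient
  have hNC : normCent G ≤ N := iInf_le _ x
  have hNsub : IsSubnormal N := by
    have hq := isSubnormal_of_nilpotent h (N.map (QuotientGroup.mk' (normCent G)))
    have := isSubnormal_comap (QuotientGroup.mk' (normCent G)) hq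
    rwa [Subgroup.comap_map_eq, QuotientGroup.ker_mk', sup_of_le_left hNC] at this
  -- C is normal in N
  have hCsub : IsSubnormal C :=
    isSubnormal_step Subgroup.le_normalizer
      (fun g hg c hc => (Subgroup.mem_normalizer_iff.mp hg c).mp hc) hNsub
  -- zpowers x is normal in C (indeed centralized)
  refine isSubnormal_step ?_ ?_ hCsub
  · intro y hy
    obtain ⟨k, rfl⟩ := hy
    exact zpow_mem (Subgroup.mem_centralizer_singleton_iff.mpr rfl) k
  · intro g hg y hy
    obtain ⟨k, rfl⟩ := hy
    have hc : Commute g x := Subgroup.mem_centralizer_singleton_iff.mp hg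
    have : g * x ^ k * g⁻¹ = x ^ k := by
      rw [mul_inv_eq_iff_eq_mul]; exact (hc.zpow_right k).eq
    rw [this]
    exact ⟨k, rfl⟩
end

section
/- Let G be a finitely generated group and H a subgroup of G. For any i ≥ 0, H is nilpotent if and only if HC_i(G)/C_i(G) (equivalently, H/(H ∩ C_i(G))) is nilpotent, assuming H is finitely generated. -/
instance (G : Type*) [Group G] (i : ℕ) (H : Subgroup G) :
    ((CSeries G i).subgroupOf H).Normal :=
  Subgroup.Normal.comap (CSeries_normal G i) _


section Stmt11Auxiliary

open Subgroup List
open scoped commutatorElement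

theorem normCent_engel_s11 {G : Type*} [Group G] {x : G} (hx : x ∈ normCent G) (g : G) :
    ⁅⁅x, g⁆, g⁆ = 1 := by
  have h1 : x ∈ Subgroup.normalizer (Subgroup.centralizer {g} : Set G) := by
    simp only [normCent, Subgroup.mem_iInf] at hx; exact hx g
  rw [Subgroup.mem_normalizer_iff] at h1
  have h2 : x⁻¹ * g * x ∈ Subgroup.centralizer {g} := by
    refine (h1 (x⁻¹ * g * x)).mpr ?_
    have e : x * (x⁻¹ * g * x) * x⁻¹ = g := by group
    rw [e]
    exact Subgroup.mem_centralizer_singleton_iff.mpr rfl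
  rw [Subgroup.mem_centralizer_singleton_iff] at h2
  have h3 : (x * g * x⁻¹) * g = g * (x * g * x⁻¹) := by
    have := congrArg (fun z => x * z * x⁻¹) h2
    simpa [mul_assoc] using this.symm
  rw [commutatorElement_eq_one_iff_mul_comm]
  have : ⁅x, g⁆ = (x * g * x⁻¹) * g⁻¹ := by group
  rw [this]
  have c1 : Commute (x * g * x⁻¹) g := h3
  have c2 : Commute (g⁻¹) g := (Commute.refl g).inv_left
  exact (c1.mul_left c2).eq


/-- If `⁅⁅a,g⁆,g⁆ = 1` for the relevant instances, then `⁅a,g⁆` commutes with `a`. -/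
theorem engel_comm_base {K : Type*} [Group K] (a g : K) (h1 : ⁅⁅a, g⁆, g⁆ = 1) (h2 : ⁅⁅a, g * a⁆, g * a⁆ = 1) :
    ⁅⁅a, g⁆, a⁆ = 1 := by
  have e1 : ⁅a, g * a⁆ = ⁅a, g⁆ := by
    have : ⁅a, g * a⁆ = ⁅a, g⁆ * (g * ⁅a, a⁆ * g⁻¹) := by group
    simp [this]
  rw [e1] at h2
  have e2 : ⁅⁅a, g⁆, g * a⁆ = ⁅⁅a, g⁆, g⁆ * (g * ⁅⁅a, g⁆, a⁆ * g⁻¹) := by group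
  rw [e2, h1, one_mul] at h2
  have := congrArg (fun z => g⁻¹ * z * g) h2
  simpa [mul_assoc] using this

/-- `a` commutes with its conjugates. -/
theorem engel_comm_conj {K : Type*} [Group K] (a g : K) (h1 : ⁅⁅a, g⁆, g⁆ = 1) (h2 : ⁅⁅a, g * a⁆, g * a⁆ = 1) :
    Commute a (g * a * g⁻¹) := by
  have hb := engel_comm_base a g h1 h2
  -- ⁅a,g⁆ commutes with a
  rw [commutatorElement_eq_one_iff_mul_comm] at hb
  have hc : Commute a ⁅a, g⁆ := hb.symm
  have e : g * a * g⁻¹ = ⁅g, a⁆ * a := by group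
  rw [e]
  have hinv : Commute a ⁅g, a⁆ := by
    have : ⁅g, a⁆ = ⁅a, g⁆⁻¹ := by group
    rw [this]; exact hc.inv_right
  exact hinv.mul_right (Commute.refl a)



theorem aux_ring {R : Type*} [Ring R] {a b : R} (ha : a * a = 0) (hb : b * b = 0)
    (hX : (a + b - a * b) * (a + b - a * b) = 0) : a * b * a = 0 := by
  have e1 : a * ((a + b - a * b) * (a + b - a * b))
      = a * a * (a + b - a * b) - a * a * (b * (a + b - a * b))
        + (a * b * a + a * (b * b) - a * b * (a * b)) := by noncomm_ring
  rw [hX, ha, hb] at e1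
  simp only [mul_zero, zero_mul, zero_sub, zero_add, add_zero, sub_zero, neg_zero] at e1
  have h2 : a * b * a = a * b * (a * b) := sub_eq_zero.mp e1.symm
  have h3 := congrArg (fun z => z * b) h2
  have e2 : a * b * (a * b) * b = a * b * a * (b * b) := by noncomm_ring
  rw [e2, hb, mul_zero] at h3
  have e3 : a * b * a * b = a * b * (a * b) := by noncomm_ring
  rw [e3] at h3
  rw [h2, h3]


theorem sublist_two_decomp {α : Type*} {x : α} :
    ∀ {l : List α}, [x, x] <+ l → ∃ p q r : List α, l = p ++ x :: (q ++ x :: r) := by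
  intro l hl
  induction l with
  | nil => simp at hl
  | cons a t ih =>
    rcases hl with _ | hl' | hl'
    case cons h' =>
      obtain ⟨p, q, r, rfl⟩ := ih h'
      exact ⟨a :: p, q, r, rfl⟩
    case cons_cons h' =>
      have hx : x ∈ t := List.singleton_sublist.mp h'
      obtain ⟨q, r, rfl⟩ := List.append_of_mem hx
      exact ⟨[], q, r, rfl⟩

theorem list_pigeonhole {α : Type*} [DecidableEq α] (S : Finset α) (l : List α)
    (hl : ∀ e ∈ l, e ∈ S) (hlen : S.card < l.length) :
    ∃ (x : α) (p q r : List α), l = p ++ x :: (q ++ x :: r) := by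
  have hnd : ¬ l.Nodup := by
    intro hnd
    have h1 : l.toFinset ⊆ S := fun e he => hl e (List.mem_toFinset.mp he)
    have h2 : l.toFinset.card = l.length := List.toFinset_card_of_nodup hnd
    have := Finset.card_le_card h1
    omega
  obtain ⟨x, hx⟩ := List.exists_duplicate_iff_not_nodup.mpr hnd
  obtain ⟨p, q, r, rfl⟩ := sublist_two_decomp (List.duplicate_iff_sublist.mp hx)
  exact ⟨x, p, q, r, rfl⟩


theorem engel_module {K : Type*} [Group K] (S : Finset K)
    (hgen : Subgroup.closure (S : Set K) = ⊤) (A : Subgroup K) [hAn : A.Normal]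
    (hab : ∀ x ∈ A, ∀ y ∈ A, x * y = y * x)
    (hEngA : ∀ a ∈ A, ∀ g : K, ⁅⁅a, g⁆, g⁆ = 1)
    {b : K} (hb : b ∈ A) :
    ∀ l : List K, l.length = S.card + 1 → l.foldr (fun k acc => ⁅acc, k⁆) b = 1 := by
  classical
  letI cg : CommGroup ↥A :=
    { (inferInstance : Group ↥A) with
      mul_comm := fun x y => Subtype.ext (hab x.1 x.2 y.1 y.2) }
  set M := Additive ↥A with hM
  have hconjmem : ∀ (g : K) (x : ↥A), g * (x : K) * g⁻¹ ∈ A := fun g x => hAn.conj_mem _ x.2 g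
  let u : K → Module.End ℤ M := fun g =>
    (AddMonoidHom.mk'
      (fun x => Additive.ofMul (⟨g * ((Additive.toMul x : ↥A) : K) * g⁻¹, hconjmem g _⟩ : ↥A))
      (by
        intro x y
        apply congrArg Additive.ofMul
        apply Subtype.ext
        show g * ((((Additive.toMul x) * (Additive.toMul y) : ↥A)) : K) * g⁻¹ = _
        simp only [toMul_ofMul, Subgroup.coe_mul]
        group)).toIntLinearMap
  have hu_apply : ∀ (g : K) (x : M),
      ((Additive.toMul (u g x) : ↥A) : K) = g * ((Additive.toMul x : ↥A) : K) * g⁻¹ :=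
    fun g x => rfl
  have hu_mul : ∀ g h : K, u (g * h) = u g * u h := by
    intro g h
    apply LinearMap.ext
    intro x
    apply congrArg Additive.ofMul
    apply Subtype.ext
    show (g * h) * ((Additive.toMul x : ↥A) : K) * (g * h)⁻¹
        = ((Additive.toMul (u g (u h x)) : ↥A) : K)
    rw [hu_apply, hu_apply]
    group
  have hu_one : u 1 = 1 := by
    apply LinearMap.ext
    intro x
    apply congrArg Additive.ofMul
    apply Subtype.ext
    show 1 * ((Additive.toMul x : ↥A) : K) * 1⁻¹ = ((Additive.toMul x : ↥A) : K)
    group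
  set T : K → Module.End ℤ M := fun g => 1 - u g with hT
  have hT_apply : ∀ (g : K) (x : M),
      ((Additive.toMul (T g x) : ↥A) : K) = ⁅((Additive.toMul x : ↥A) : K), g⁆ := by
    intro g x
    show ((Additive.toMul ((1 - u g) x) : ↥A) : K) = _
    rw [LinearMap.sub_apply, Module.End.one_apply, toMul_sub]
    rw [div_eq_mul_inv]
    show ((Additive.toMul x : ↥A) : K) * (((Additive.toMul (u g x)) : ↥A) : K)⁻¹ = _
    rw [hu_apply]
    group
  have hT2 : ∀ g : K, T g * T g = 0 := by
    intro g
    apply LinearMap.ext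
    intro x
    rw [Module.End.mul_apply, LinearMap.zero_apply]
    have h1 : ((Additive.toMul (T g (T g x)) : ↥A) : K) = 1 := by
      rw [hT_apply, hT_apply]
      exact hEngA _ (Additive.toMul x).2 g
    have h2 : Additive.toMul (T g (T g x)) = (1 : ↥A) := Subtype.ext h1
    have := congrArg Additive.ofMul h2
    simpa using this
  have hT_mul_expand : ∀ g h : K, T g * T h = T g + T h - T (g * h) := by
    intro g h
    show (1 - u g) * (1 - u h) = (1 - u g) + (1 - u h) - (1 - u (g * h))
    rw [hu_mul g h]
    noncomm_ring
  have hT_inv : ∀ g : K, T g⁻¹ = - T g := by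
    intro g
    have h0 : T g * T g = 0 := hT2 g
    have h0' : (1 - u g) * (1 - u g) = 0 := h0
    have e0 : u g⁻¹ * ((1 - u g) * (1 - u g))
        = u g⁻¹ - u g⁻¹ * u g - u g⁻¹ * u g + u g⁻¹ * u g * u g := by noncomm_ring
    rw [h0', mul_zero] at e0
    have hinv : u g⁻¹ * u g = 1 := by rw [← hu_mul, inv_mul_cancel, hu_one]
    rw [hinv, one_mul] at e0
    have e1 : T g⁻¹ + T g = -(u g⁻¹ - 1 - 1 + u g) := by
      show (1 - u g⁻¹) + (1 - u g) = _
      noncomm_ring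
    rw [← e0, neg_zero] at e1
    exact eq_neg_of_add_eq_zero_left e1
  have hT3 : ∀ g h : K, T g * T h * T g = 0 := by
    intro g h
    refine aux_ring (hT2 g) (hT2 h) ?_
    have e : T g + T h - T g * T h = T (g * h) := by
      rw [hT_mul_expand g h]; abel
    rw [e]
    exact hT2 (g * h)
  have Tword : ∀ (n : ℕ) (l : List K), l.length = n → ∀ g : K,
      T g * (l.map T).prod * T g = 0 := by
    intro n
    induction n using Nat.strong_induction_on with
    | _ n ih =>
      intro l hl g
      match l with
      | [] => simpa using hT2 g
      | [w] => simpa using hT3 g w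
      | w₁ :: w₂ :: rest =>
        have e : ((w₁ :: w₂ :: rest).map T).prod = (T w₁ * T w₂) * (rest.map T).prod := by
          simp [List.map_cons, List.prod_cons, mul_assoc]
        rw [e, hT_mul_expand w₁ w₂]
        have expand : T g * ((T w₁ + T w₂ - T (w₁ * w₂)) * (rest.map T).prod) * T g
            = T g * ((T w₁ * (rest.map T).prod)) * T g
              + T g * ((T w₂ * (rest.map T).prod)) * T g
              - T g * ((T (w₁ * w₂) * (rest.map T).prod)) * T g := by noncomm_ring
        rw [expand]
        have hn : rest.length + 2 = n := by simpa using hl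
        have h1 := ih (rest.length + 1) (by omega) (w₁ :: rest) (by simp) g
        have h2 := ih (rest.length + 1) (by omega) (w₂ :: rest) (by simp) g
        have h3 := ih (rest.length + 1) (by omega) ((w₁ * w₂) :: rest) (by simp) g
        rw [List.map_cons, List.prod_cons] at h1 h2 h3
        rw [h1, h2, h3]
        simp
  let Dset : ℕ → Set (Module.End ℤ M) := fun j =>
    {r | ∃ l : List K, (∀ e ∈ l, e ∈ (S : Set K)) ∧ j ≤ l.length ∧ r = (l.map T).prod}
  let D : ℕ → AddSubgroup (Module.End ℤ M) := fun j => AddSubgroup.closure (Dset j)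
  have hDmono : ∀ {i j : ℕ}, i ≤ j → D j ≤ D i := by
    intro i j hij
    apply AddSubgroup.closure_mono
    rintro r ⟨l, h1, h2, h3⟩
    exact ⟨l, h1, le_trans hij h2, h3⟩
  have hDmul : ∀ (i j : ℕ) (x : Module.End ℤ M), x ∈ D i →
      ∀ y ∈ D j, x * y ∈ D (i + j) := by
    intro i j x hx
    induction hx using AddSubgroup.closure_induction with
    | mem r hr =>
      intro y hy
      induction hy using AddSubgroup.closure_induction with
      | mem r' hr' =>
        obtain ⟨l, h1, h2, rfl⟩ := hr
        obtain ⟨l', h1', h2', rfl⟩ := hr'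
        refine AddSubgroup.subset_closure ⟨l ++ l', ?_, ?_, ?_⟩
        · intro e he
          rcases List.mem_append.mp he with h | h
          · exact h1 e h
          · exact h1' e h
        · simp only [List.length_append]; omega
        · rw [List.map_append, List.prod_append]
      | zero => simpa using zero_mem _
      | add y z _ _ ihy ihz =>
        rw [mul_add]
        exact add_mem ihy ihz
      | neg y _ ihy =>
        rw [mul_neg]
        exact neg_mem ihy
    | zero =>
      intro y hy
      rw [zero_mul]
      exact zero_mem _
    | add x z _ _ ihx ihz =>
      intro y hy
      rw [add_mul]
      exact add_mem (ihx y hy) (ihz y hy)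
    | neg x _ ihx =>
      intro y hy
      rw [neg_mul]
      exact neg_mem (ihx y hy)
  have hTin : ∀ g : K, T g ∈ D 1 := by
    intro g
    have hg : g ∈ Subgroup.closure (S : Set K) := by rw [hgen]; exact Subgroup.mem_top g
    induction hg using Subgroup.closure_induction with
    | mem s hs =>
      exact AddSubgroup.subset_closure ⟨[s], by simpa using hs, by simp, by simp⟩
    | one =>
      have h1 : T (1 : K) = 0 := by
        show 1 - u 1 = 0
        rw [hu_one]; simp
      rw [h1]; exact zero_mem _
    | mul x y hx hy ihx ihy =>
      have h1 : T (x * y) = T x + T y - T x * T y := by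
        rw [hT_mul_expand x y]; abel
      rw [h1]
      refine sub_mem (add_mem ihx ihy) ?_
      exact hDmono (by omega) (hDmul 1 1 _ ihx _ ihy)
    | inv x hx ihx =>
      rw [hT_inv]; exact neg_mem ihx
  have hprodD : ∀ l : List K, (l.map T).prod ∈ D l.length := by
    intro l
    induction l with
    | nil =>
      refine AddSubgroup.subset_closure ⟨[], by simp, by simp, by simp⟩
    | cons k t ih =>
      rw [List.map_cons, List.prod_cons]
      have := hDmul 1 t.length _ (hTin k) _ ih
      have he : 1 + t.length = (k :: t).length := by simp [add_comm]
      rwa [he] at this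
  have hDzero : ∀ r ∈ Dset (S.card + 1), r = (0 : Module.End ℤ M) := by
    rintro r ⟨l, hent, hlen, rfl⟩
    obtain ⟨x, p, q, r', rfl⟩ := list_pigeonhole S l (fun e he => hent e he) (by omega)
    have hz := Tword q.length q rfl x
    calc ((p ++ x :: (q ++ x :: r')).map T).prod
        = (p.map T).prod * ((T x * (q.map T).prod * T x) * (r'.map T).prod) := by
          simp [List.map_append, List.prod_append, List.map_cons, List.prod_cons, mul_assoc]
      _ = 0 := by rw [hz]; simp
  have hDbot : D (S.card + 1) ≤ ⊥ := by
    rw [AddSubgroup.closure_le]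
    intro r hr
    simp [hDzero r hr]
  intro l hl
  have hTprod : (l.map T).prod = 0 := by
    have h := hprodD l
    rw [hl] at h
    simpa using hDbot h
  have happly : ∀ (l' : List K) (x : ↥A),
      ((Additive.toMul ((l'.map T).prod (Additive.ofMul x)) : ↥A) : K)
        = l'.foldr (fun k acc => ⁅acc, k⁆) (x : K) := by
    intro l'
    induction l' with
    | nil => intro x; simp
    | cons k t ih =>
      intro x
      rw [List.map_cons, List.prod_cons, Module.End.mul_apply, hT_apply, List.foldr_cons]
      exact congrArg (fun z => ⁅z, k⁆) (ih x)
  have hfin := happly l ⟨b, hb⟩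
  rw [hTprod] at hfin
  simpa using hfin.symm


/-- upper central series membership from vanishing iterated commutators -/
theorem mem_uc_of_fold {K : Type*} [Group K] :
    ∀ (n : ℕ) (x : K), (∀ l : List K, l.length = n → l.foldr (fun k acc => ⁅acc, k⁆) x = 1) →
      x ∈ Subgroup.upperCentralSeries K n := by
  intro n
  induction n with
  | zero =>
    intro x hx
    have h := hx [] rfl
    simp only [List.foldr_nil] at h
    rw [Subgroup.upperCentralSeries_zero, h]
    exact Subgroup.one_mem _
  | succ n ih =>
    intro x hx
    rw [Subgroup.mem_upperCentralSeries_succ_iff]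
    intro y
    have h : ⁅x, y⁆ ∈ Subgroup.upperCentralSeries K n := by
      apply ih
      intro l hl
      have := hx (l ++ [y]) (by simp [hl])
      rwa [List.foldr_append] at this
    have e : ⁅x, y⁆ = x * y * x⁻¹ * y⁻¹ := rfl
    rwa [e] at h


/-- the core theorem -/
theorem core_mem_uc {K : Type*} [Group K] (S : Finset K)
    (hgen : Subgroup.closure (S : Set K) = ⊤) (N : Subgroup K) [hN : N.Normal]
    (hEng : ∀ a ∈ N, ∀ g : K, ⁅⁅a, g⁆, g⁆ = 1) {b : K} (hb : b ∈ N) :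
    b ∈ Subgroup.upperCentralSeries K (S.card + 1) := by
  set A : Subgroup K := Subgroup.normalClosure {b} with hA
  have hAle : A ≤ N := Subgroup.normalClosure_le_normal (by simpa using hb)
  haveI hAn : A.Normal := Subgroup.normalClosure_normal
  -- conjugates of b commute pairwise
  have hconj : ∀ g h : K, Commute (g * b * g⁻¹) (h * b * h⁻¹) := by
    intro g h
    have hbase : Commute b ((g⁻¹ * h) * b * (g⁻¹ * h)⁻¹) :=
      engel_comm_conj b (g⁻¹ * h) (hEng b hb _) (hEng b hb _)
    have := congrArg (fun z => g * z * g⁻¹) (hbase.eq)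
    have e1 : g * (b * ((g⁻¹ * h) * b * (g⁻¹ * h)⁻¹)) * g⁻¹
        = (g * b * g⁻¹) * (h * b * h⁻¹) := by group
    have e2 : g * (((g⁻¹ * h) * b * (g⁻¹ * h)⁻¹) * b) * g⁻¹
        = (h * b * h⁻¹) * (g * b * g⁻¹) := by group
    rw [e1, e2] at this
    exact this
  -- A is commutative
  have hab : ∀ x ∈ A, ∀ y ∈ A, x * y = y * x := by
    have hgenset : ∀ x ∈ Group.conjugatesOfSet ({b} : Set K),
        ∀ y ∈ Group.conjugatesOfSet ({b} : Set K), Commute x y := by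
      intro x hx y hy
      rw [Group.mem_conjugatesOfSet_iff] at hx hy
      obtain ⟨a1, ha1, hc1⟩ := hx
      obtain ⟨a2, ha2, hc2⟩ := hy
      rw [Set.mem_singleton_iff] at ha1 ha2
      subst ha1; subst ha2
      obtain ⟨c1, rfl⟩ := isConj_iff.mp hc1
      obtain ⟨c2, rfl⟩ := isConj_iff.mp hc2
      exact hconj c1 c2
    intro x hx y hy
    have hx' : x ∈ Subgroup.closure (Group.conjugatesOfSet ({b} : Set K)) := hx
    have hy' : y ∈ Subgroup.closure (Group.conjugatesOfSet ({b} : Set K)) := hy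
    refine Subgroup.closure_induction₂ (fun s t hs ht => hgenset s hs t ht)
      (fun z hz => ?_) (fun z hz => ?_)
      (fun p q z hp hq hz h1 h2 => ?_) (fun p q z hp hq hz h1 h2 => ?_)
      (fun p z hp hz h1 => ?_) (fun p z hp hz h1 => ?_) hx' hy'
    · simp
    · simp
    · exact Commute.mul_left h1 h2
    · exact Commute.mul_right h1 h2
    · exact Commute.inv_left h1
    · exact Commute.inv_right h1
  have hEngA : ∀ a ∈ A, ∀ g : K, ⁅⁅a, g⁆, g⁆ = 1 := fun a ha g => hEng a (hAle ha) g
  have hfold := engel_module S hgen A hab hEngA (Subgroup.subset_normalClosure rfl)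
  exact mem_uc_of_fold (S.card + 1) b (fun l hl => hfold l hl)


/-- lifting upper central series membership along a hom with small kernel -/
theorem lift_uc {K K' : Type*} [Group K] [Group K'] (φ : K →* K') {j : ℕ}
    (hker : φ.ker ≤ Subgroup.upperCentralSeries K j) :
    ∀ (s : ℕ) (x : K), φ x ∈ Subgroup.upperCentralSeries K' s → x ∈ Subgroup.upperCentralSeries K (s + j) := by
  intro s
  induction s with
  | zero =>
    intro x hx
    rw [Subgroup.upperCentralSeries_zero, Subgroup.mem_bot] at hx
    rw [zero_add]
    exact hker hx
  | succ s ih =>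
    intro x hx
    have : (s + 1) + j = (s + j) + 1 := by omega
    rw [this, Subgroup.mem_upperCentralSeries_succ_iff]
    intro y
    apply ih
    rw [Subgroup.mem_upperCentralSeries_succ_iff] at hx
    have := hx (φ y)
    have e : φ (x * y * x⁻¹ * y⁻¹) = φ x * φ y * (φ x)⁻¹ * (φ y)⁻¹ := by
      simp [map_mul, map_inv]
    rwa [commutatorElement_def, e, ← commutatorElement_def]
  -- done


theorem lcs_map_surj {K K' : Type*} [Group K] [Group K'] (f : K →* K')
    (hf : Function.Surjective f) :
    ∀ n, Subgroup.map f (Subgroup.lowerCentralSeries (⊤ : Subgroup K) n) = Subgroup.lowerCentralSeries (⊤ : Subgroup K') n := by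
  intro n
  induction n with
  | zero =>
    simp only [Subgroup.lowerCentralSeries_zero]
    rw [← MonoidHom.range_eq_map]
    exact f.range_eq_top_of_surjective hf
  | succ n ih =>
    have e1 : Subgroup.lowerCentralSeries (⊤ : Subgroup K) (n + 1) = ⁅Subgroup.lowerCentralSeries (⊤ : Subgroup K) n, ⊤⁆ := rfl
    have e2 : Subgroup.lowerCentralSeries (⊤ : Subgroup K') (n + 1) = ⁅Subgroup.lowerCentralSeries (⊤ : Subgroup K') n, ⊤⁆ := rfl
    rw [e1, e2, Subgroup.map_commutator, ih]
    congr 1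
    rw [← MonoidHom.range_eq_map]
    exact f.range_eq_top_of_surjective hf


theorem lcs_interleave {K : Type*} [Group K] :
    ∀ (t a : ℕ), Subgroup.lowerCentralSeries (⊤ : Subgroup K) a ≤ Subgroup.upperCentralSeries K t →
      Subgroup.lowerCentralSeries (⊤ : Subgroup K) (a + t) = ⊥ := by
  intro t
  induction t with
  | zero =>
    intro a h
    rw [Subgroup.upperCentralSeries_zero] at h
    rw [add_zero]
    exact le_bot_iff.mp h
  | succ t ih =>
    intro a h
    have hstep : Subgroup.lowerCentralSeries (⊤ : Subgroup K) (a + 1) ≤ Subgroup.upperCentralSeries K t := by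
      have e1 : Subgroup.lowerCentralSeries (⊤ : Subgroup K) (a + 1) = ⁅Subgroup.lowerCentralSeries (⊤ : Subgroup K) a, ⊤⁆ := rfl
      rw [e1, Subgroup.commutator_le]
      intro g1 hg1 g2 _
      have hg1' := h hg1
      rw [Subgroup.mem_upperCentralSeries_succ_iff] at hg1'
      exact hg1' g2
    have := ih (a + 1) hstep
    rwa [show a + 1 + t = a + (t + 1) by omega] at this


theorem cseries_chain {G : Type*} [Group G] (H : Subgroup G) (S : Finset ↥H)
    (hS : Subgroup.closure (S : Set ↥H) = ⊤) :
    ∀ i : ℕ, (CSeries G i).subgroupOf H ≤ Subgroup.upperCentralSeries ↥H (i * (S.card + 1)) := by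
  intro i
  induction i with
  | zero =>
    have e : CSeries G 0 = (⊥ : Subgroup G) := rfl
    rw [e, Subgroup.bot_subgroupOf]
    exact bot_le
  | succ i ih =>
    classical
    intro x hx
    set Ci := CSeries G i with hCi
    let Q := G ⧸ Ci
    let φ0 : G →* Q := QuotientGroup.mk' Ci
    let H' : Subgroup Q := H.map φ0
    let π : ↥H →* ↥H' := φ0.subgroupMap H
    have hπs : Function.Surjective π := φ0.subgroupMap_surjective H
    -- generators of H'
    have hgen' : Subgroup.closure ((S.image π : Finset ↥H') : Set ↥H') = ⊤ := by
      rw [Finset.coe_image, ← MonoidHom.map_closure, hS]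
      rw [← MonoidHom.range_eq_map]
      exact π.range_eq_top_of_surjective hπs
    haveI hN' : ((normCent Q).subgroupOf H').Normal :=
      Subgroup.Normal.comap (normCent_normal Q) _
    have hEng' : ∀ a ∈ (normCent Q).subgroupOf H', ∀ g : ↥H', ⁅⁅a, g⁆, g⁆ = 1 := by
      intro a ha g
      have hval : ((⁅⁅a, g⁆, g⁆ : ↥H') : Q) = ⁅⁅(a : Q), (g : Q)⁆, (g : Q)⁆ := by
        simp only [commutatorElement_def, Subgroup.coe_mul, Subgroup.coe_inv]
      apply Subtype.ext
      rw [hval]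
      exact normCent_engel_s11 (Subgroup.mem_subgroupOf.mp ha) _
    -- membership of π x
    have hx' : (x : G) ∈ Subgroup.comap φ0 (normCent Q) := hx
    have hπx : π x ∈ (normCent Q).subgroupOf H' := by
      rw [Subgroup.mem_subgroupOf]
      exact hx'
    have hcore := core_mem_uc (S.image π) hgen' ((normCent Q).subgroupOf H') hEng' hπx
    have hcore2 : π x ∈ Subgroup.upperCentralSeries ↥H' (S.card + 1) := by
      refine Subgroup.upperCentralSeries_mono ↥H' ?_ hcore
      have := Finset.card_image_le (s := S) (f := π)
      omega
    -- kernel of π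
    have hker : π.ker ≤ Subgroup.upperCentralSeries ↥H (i * (S.card + 1)) := by
      intro y hy
      apply ih
      rw [Subgroup.mem_subgroupOf]
      rw [MonoidHom.mem_ker] at hy
      have : φ0 (y : G) = 1 := by
        have := congrArg (Subtype.val) hy
        exact this
      rwa [← QuotientGroup.ker_mk' Ci, MonoidHom.mem_ker]
    have := lift_uc π hker (S.card + 1) x hcore2
    rwa [show (S.card + 1) + i * (S.card + 1) = (i + 1) * (S.card + 1) by ring] at this

end Stmt11Auxiliary

/-- For `H ≤ G` finitely generated, `H` is nilpotent iff `H/(H ∩ C_i(G))` is nilpotent. -/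
theorem stmt11 (G : Type*) [Group G] (hG : Group.FG G) (H : Subgroup G)
    (hH : Group.FG H) (i : ℕ) :
    Group.IsNilpotent H ↔ Group.IsNilpotent (H ⧸ (CSeries G i).subgroupOf H) := by
  constructor
  · intro h
    exact nilpotent_quotient_of_nilpotent _
  · intro h
    obtain ⟨S, hS⟩ : ∃ S : Finset ↥H, Subgroup.closure (S : Set ↥H) = ⊤ := by
      obtain ⟨n, S, -, hS⟩ := Group.fg_iff'.mp hH
      exact ⟨S, hS⟩
    obtain ⟨n, hn⟩ := Subgroup.nilpotent_iff_lowerCentralSeries.mp h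
    have hle : Subgroup.lowerCentralSeries (⊤ : Subgroup ↥H) n ≤ (CSeries G i).subgroupOf H := by
      have hmap := lcs_map_surj (QuotientGroup.mk' ((CSeries G i).subgroupOf H))
        QuotientGroup.mk_surjective n
      rw [hn] at hmap
      have h2 := (Subgroup.map_eq_bot_iff _).mp hmap
      rwa [QuotientGroup.ker_mk'] at h2
    have hZ := hle.trans (cseries_chain H S hS i)
    rw [Subgroup.nilpotent_iff_lowerCentralSeries]
    exact ⟨n + i * (S.card + 1), lcs_interleave _ _ hZ⟩
end

section
/- A finitely generated group G is nilpotent if and only if G = C_n(G) for some positive integer n, where C_0(G) = 1 and C_{i+1}(G)/C_i(G) = C(G/C_i(G)) with C(K) = ⋂_{a∈K} N_K(C_K(a)). -/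
open scoped commutatorElement

lemma ring_anticomm {R : Type*} [Ring R] {p q : R} (hp : p * p = 0) (hq : q * q = 0)
    (h3 : (p + q + p * q) * (p + q + p * q) = 0)
    (h4 : (q + p + q * p) * (q + p + q * p) = 0) :
    p * q = -(q * p) := by
  have hp' : ∀ r : R, p * (p * r) = 0 := fun r => by rw [← mul_assoc, hp, zero_mul]
  have hq' : ∀ r : R, q * (q * r) = 0 := fun r => by rw [← mul_assoc, hq, zero_mul]
  have e3 : p*q + q*p + q*(p*q) + p*(q*p) + p*(q*(p*q)) = 0 := by
    have expand : (p + q + p * q) * (p + q + p * q)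
        = p*p + p*q + p*(p*q) + q*p + q*q + q*(p*q) + p*(q*p) + p*(q*q) + p*(q*(p*q)) := by
      noncomm_ring
    have h := h3
    rw [expand] at h
    simpa only [hp, hq, hp', hq', mul_zero, zero_add, add_zero, zero_mul] using h
  have e4 : q*p + p*q + p*(q*p) + q*(p*q) + q*(p*(q*p)) = 0 := by
    have expand : (q + p + q * p) * (q + p + q * p)
        = q*q + q*p + q*(q*p) + p*q + p*p + p*(q*p) + q*(p*q) + q*(p*p) + q*(p*(q*p)) := by
      noncomm_ring
    have h := h4
    rw [expand] at h
    simpa only [hp, hq, hp', hq', mul_zero, zero_add, add_zero, zero_mul] using h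
  have A1 : p*(q*p) + p*(q*(p*q)) = 0 := by
    have h := congrArg (fun z => p * z) e3
    simpa only [mul_add, mul_zero, hp', hq', zero_add, add_zero] using h
  have A2 : q*(p*q) + q*(p*(q*p)) = 0 := by
    have h := congrArg (fun z => q * z) e4
    simpa only [mul_add, mul_zero, hp', hq', zero_add, add_zero] using h
  have e4' : p*q + q*p + q*(p*q) + p*(q*p) + q*(p*(q*p)) = 0 := by
    rw [← e4]; abel
  have A3 : p*(q*(p*q)) = q*(p*(q*p)) := add_left_cancel (e3.trans e4'.symm)
  have E1 : p*q + q*p = q*(p*(q*p)) := by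
    calc p*q + q*p
        = (p*q + q*p + q*(p*q) + p*(q*p) + p*(q*(p*q)))
          - (p*(q*p) + p*(q*(p*q))) - (q*(p*q) + q*(p*(q*p))) + q*(p*(q*p)) := by abel
      _ = 0 - 0 - 0 + q*(p*(q*p)) := by rw [e3, A1, A2]
      _ = q*(p*(q*p)) := by abel
  have E1' : p*q + q*p = p*(q*(p*q)) := by rw [E1, ← A3]
  have pqp0 : p*(q*p) = 0 := by
    calc p*(q*p) = p*(p*q) + p*(q*p) := by rw [hp' q, zero_add]
      _ = p*(p*q + q*p) := by rw [mul_add]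
      _ = p*(p*(q*(p*q))) := by rw [← E1']
      _ = 0 := hp' _
  have key : p*q + q*p = 0 := by rw [E1, pqp0, mul_zero]
  exact eq_neg_of_add_eq_zero_left key

section EngelOps

variable {G : Type*} [Group G] {M : Type*} [AddCommGroup M]

/-- Operator-level: products of `S.card + 1` operators `1 - Φ g` vanish. -/
lemma engel_ops (Φ : G →* AddMonoid.End M)
    (hsq : ∀ g : G, (1 - Φ g) * (1 - Φ g) = 0)
    (S : Finset G) (hS : Subgroup.closure (S : Set G) = ⊤) :
    ∀ l : List G, S.card + 1 ≤ l.length →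
      ((l.map (fun g => 1 - Φ g)).prod : AddMonoid.End M) = 0 := by
  classical
  set ε : G → AddMonoid.End M := fun g => 1 - Φ g with hεdef
  have hεapp : ∀ g : G, ε g = 1 - Φ g := fun g => rfl
  have hsq' : ∀ g : G, ε g * ε g = 0 := hsq
  -- anticommutation
  have anti : ∀ v w : G, ε v * ε w = -(ε w * ε v) := by
    intro v w
    have sq : ∀ g : G, (Φ g - 1) * (Φ g - 1) = 0 := fun g => by
      calc (Φ g - 1) * (Φ g - 1) = (1 - Φ g) * (1 - Φ g) := by noncomm_ring
        _ = 0 := hsq g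
    have hpq : (Φ v - 1) + (Φ w - 1) + (Φ v - 1) * (Φ w - 1) = Φ (v*w) - 1 := by
      rw [map_mul]; noncomm_ring
    have hqp : (Φ w - 1) + (Φ v - 1) + (Φ w - 1) * (Φ v - 1) = Φ (w*v) - 1 := by
      rw [map_mul]; noncomm_ring
    have h := ring_anticomm (sq v) (sq w) (by rw [hpq]; exact sq _) (by rw [hqp]; exact sq _)
    calc ε v * ε w = (Φ v - 1) * (Φ w - 1) := by rw [hεapp, hεapp]; noncomm_ring
      _ = -((Φ w - 1) * (Φ v - 1)) := h
      _ = -(ε w * ε v) := by rw [hεapp, hεapp]; congr 1; noncomm_ring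
  have εmul : ∀ g h : G, ε (g * h) = ε g + ε h - ε g * ε h := by
    intro g h; rw [hεapp, hεapp, hεapp, map_mul]; noncomm_ring
  have εone : ε (1 : G) = 0 := by rw [hεapp, map_one]; noncomm_ring
  have εinv : ∀ g : G, ε g⁻¹ = -(ε g) := by
    intro g
    have h1 : (0 : AddMonoid.End M) = ε g⁻¹ + ε g - ε g⁻¹ * ε g := by
      rw [← εmul, inv_mul_cancel, εone]
    have h2 : ε g⁻¹ * ε g = 0 := by
      have h3 := congrArg (fun z => z * ε g) h1
      simp only [zero_mul, add_mul, sub_mul, mul_assoc] at h3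
      rw [hsq' g] at h3
      simp only [mul_zero, add_zero, sub_zero] at h3
      exact h3.symm
    rw [h2, sub_zero] at h1
    exact eq_neg_of_add_eq_zero_left h1.symm
  -- sandwich
  have sandwich : ∀ (l : List G) (t : G), ε t * ((l.map ε).prod * ε t) = 0 := by
    intro l
    induction l with
    | nil => intro t; simpa using hsq' t
    | cons a l ih =>
      intro t
      rw [List.map_cons, List.prod_cons]
      calc ε t * ((ε a * (l.map ε).prod) * ε t)
          = -(ε a * ε t) * ((l.map ε).prod * ε t) := by rw [← anti]; noncomm_ring
        _ = -(ε a * (ε t * ((l.map ε).prod * ε t))) := by noncomm_ring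
        _ = 0 := by rw [ih t, mul_zero, neg_zero]
  -- duplicates kill products
  have dup : ∀ l : List G, ¬ l.Nodup → (l.map ε).prod = 0 := by
    intro l
    induction l with
    | nil => intro h; exact absurd List.nodup_nil h
    | cons a l ih =>
      intro h
      by_cases ha : a ∈ l
      · obtain ⟨s, t, rfl⟩ := List.append_of_mem ha
        rw [List.map_cons, List.prod_cons, List.map_append, List.prod_append,
            List.map_cons, List.prod_cons]
        calc ε a * ((s.map ε).prod * (ε a * (t.map ε).prod))
            = (ε a * ((s.map ε).prod * ε a)) * (t.map ε).prod := by noncomm_ring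
          _ = 0 := by rw [sandwich s a, zero_mul]
      · have hnl : ¬ l.Nodup := fun hn => h (List.nodup_cons.mpr ⟨ha, hn⟩)
        rw [List.map_cons, List.prod_cons, ih hnl, mul_zero]
  -- pigeonhole
  have pigeon : ∀ l : List G, S.card + 1 ≤ l.length → (∀ a ∈ l, a ∈ S) →
      (l.map ε).prod = 0 := by
    intro l hl hm
    apply dup
    intro hnd
    have h1 : l.toFinset ⊆ S := fun a ha => hm a (List.mem_toFinset.mp ha)
    have h2 : l.toFinset.card = l.length := List.toFinset_card_of_nodup hnd
    have h3 := Finset.card_le_card h1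
    omega
  -- the additive span machinery
  set Gen : ℕ → Set (AddMonoid.End M) := fun j =>
    {r | ∃ l : List G, j ≤ l.length ∧ (∀ a ∈ l, a ∈ S) ∧ r = (l.map ε).prod} with hGen
  set JJ : ℕ → AddSubgroup (AddMonoid.End M) := fun j => AddSubgroup.closure (Gen j) with hJJ
  have JJmono : ∀ j : ℕ, JJ (j+1) ≤ JJ j := by
    intro j
    apply AddSubgroup.closure_mono
    rintro r ⟨l, hl, hm, he⟩
    exact ⟨l, le_trans (Nat.le_succ j) hl, hm, he⟩
  have mulJJ : ∀ i j : ℕ, ∀ f ∈ JJ i, ∀ g ∈ JJ j, f * g ∈ JJ (i + j) := by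
    intro i j f hf
    refine AddSubgroup.closure_induction ?_ ?_ ?_ ?_ hf
    · rintro r ⟨l₁, hl₁, hm₁, rfl⟩ g hg
      refine AddSubgroup.closure_induction ?_ ?_ ?_ ?_ hg
      · rintro u ⟨l₂, hl₂, hm₂, rfl⟩
        refine AddSubgroup.subset_closure ⟨l₁ ++ l₂, ?_, ?_, ?_⟩
        · rw [List.length_append]; omega
        · intro a ha
          rcases List.mem_append.mp ha with h | h
          exacts [hm₁ a h, hm₂ a h]
        · rw [List.map_append, List.prod_append]
      · rw [mul_zero]; exact zero_mem _
      · intro a b _ _ ha hb; rw [mul_add]; exact add_mem ha hb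
      · intro a _ ha; rw [mul_neg]; exact neg_mem ha
    · intro g hg; rw [zero_mul]; exact zero_mem _
    · intro a b _ _ ha hb g hg; rw [add_mul]; exact add_mem (ha g hg) (hb g hg)
    · intro a _ ha g hg; rw [neg_mul]; exact neg_mem (ha g hg)
  have εmem : ∀ t : G, ε t ∈ JJ 1 := by
    intro t
    have ht : t ∈ Subgroup.closure (S : Set G) := by rw [hS]; trivial
    refine Subgroup.closure_induction ?_ ?_ ?_ ?_ ht
    · intro s hs
      refine AddSubgroup.subset_closure ⟨[s], by simp, ?_, by simp⟩
      intro a ha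
      rw [List.mem_singleton] at ha
      subst ha; exact hs
    · rw [εone]; exact zero_mem _
    · intro a b _ _ ha hb
      rw [εmul]
      exact sub_mem (add_mem ha hb) (JJmono 1 (mulJJ 1 1 _ ha _ hb))
    · intro a _ ha; rw [εinv]; exact neg_mem ha
  have prodJJ : ∀ l : List G, (l.map ε).prod ∈ JJ l.length := by
    intro l
    induction l with
    | nil => exact AddSubgroup.subset_closure ⟨[], by simp, by simp, by simp⟩
    | cons a l ih =>
      have h := mulJJ 1 l.length _ (εmem a) _ ih
      have hlen : (a :: l).length = 1 + l.length := by simp [Nat.add_comm]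
      rw [List.map_cons, List.prod_cons, hlen]
      exact h
  -- conclusion
  intro l hl
  have h := prodJJ l
  have hbot : JJ l.length ≤ ⊥ := by
    rw [hJJ]
    apply (AddSubgroup.closure_le _).mpr
    rintro r ⟨l', hl', hm', rfl⟩
    have : (l'.map ε).prod = 0 := pigeon l' (le_trans hl hl') hm'
    simp [this]
  have := hbot h
  simpa using this

end EngelOps

section UpperCentral

variable {G : Type*} [Group G]

lemma foldl_commutator_map {H : Type*} [Group H] (f : G →* H) (x : G) (l : List G) :
    f (l.foldl (fun y t => ⁅y, t⁆) x) = (l.map f).foldl (fun y t => ⁅y, t⁆) (f x) := by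
  induction l generalizing x with
  | nil => rfl
  | cons a l ih =>
    rw [List.foldl_cons, List.map_cons, List.foldl_cons, ih, map_commutatorElement]

lemma mem_upperCentralSeries_of_foldl (m base : ℕ) (x : G)
    (h : ∀ l : List G, l.length = m →
      l.foldl (fun y t => ⁅y, t⁆) x ∈ Subgroup.upperCentralSeries G base) :
    x ∈ Subgroup.upperCentralSeries G (base + m) := by
  induction m generalizing x with
  | zero => exact h [] rfl
  | succ m ih =>
    show x ∈ Subgroup.upperCentralSeries G ((base + m) + 1)
    rw [mem_upperCentralSeries_succ_iff]
    intro y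
    have hy := ih ⁅x, y⁆ (fun l hl => by
      have h2 := h (y :: l) (by simp [hl])
      simpa using h2)
    exact hy

lemma foldl_commutator_eq_one_of_mem (j : ℕ) (x : G) (hx : x ∈ Subgroup.upperCentralSeries G j)
    (l : List G) (hl : l.length = j) : l.foldl (fun y t => ⁅y, t⁆) x = 1 := by
  induction j generalizing x l with
  | zero =>
    rw [List.length_eq_zero_iff] at hl; subst hl
    rw [upperCentralSeries_zero] at hx
    simpa using hx
  | succ j ih =>
    cases l with
    | nil => simp at hl
    | cons t l' =>
      rw [List.foldl_cons]
      apply ih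
      · have h2 := mem_upperCentralSeries_succ_iff.mp hx t
        exact h2
      · simpa using hl

lemma comap_upperCentralSeries_le_add {N : Subgroup G} [N.Normal] {m j : ℕ}
    (hNm : N ≤ Subgroup.upperCentralSeries G m) :
    Subgroup.comap (QuotientGroup.mk' N) (Subgroup.upperCentralSeries (G ⧸ N) j)
      ≤ Subgroup.upperCentralSeries G (m + j) := by
  intro x hx
  apply mem_upperCentralSeries_of_foldl j m x
  intro l hl
  apply hNm
  have h1 := foldl_commutator_map (QuotientGroup.mk' N) x l
  have h2 : (l.map (QuotientGroup.mk' N)).foldl (fun y t => ⁅y, t⁆)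
      (QuotientGroup.mk' N x) = 1 :=
    foldl_commutator_eq_one_of_mem j _ hx _ (by simp [hl])
  have h3 : QuotientGroup.mk' N (l.foldl (fun y t => ⁅y, t⁆) x) = 1 := h1.trans h2
  exact (QuotientGroup.eq_one_iff _).mp h3

end UpperCentral

section KeyModule

variable {G : Type*} [Group G]

lemma key_module {A : Subgroup G} [hN : A.Normal]
    (hcomm : ∀ a b : ↥A, a * b = b * a)
    (hEng : ∀ (a : ↥A) (g : G), Commute ⁅(a : G), g⁆ g)
    (S : Finset G) (hS : Subgroup.closure (S : Set G) = ⊤)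
    {x : G} (hxA : x ∈ A) : x ∈ Subgroup.upperCentralSeries G (S.card + 1) := by
  letI : CommGroup ↥A := { (inferInstance : Group ↥A) with mul_comm := hcomm }
  -- the group-level Engel computation
  have hEG : ∀ (b : ↥A) (g : G),
      (g * (g * (b:G) * g⁻¹) * g⁻¹) * (b:G) = (g * (b:G) * g⁻¹) * (g * (b:G) * g⁻¹) := by
    intro b g
    set B := g * (b:G) * g⁻¹ with hB
    have h1 : ⁅(b:G), g⁆ * g = g * ⁅(b:G), g⁆ := (hEng b g).eq
    have h2 : g * ⁅(b:G), g⁆ * g⁻¹ = ⁅(b:G), g⁆ := by rw [← h1]; group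
    have hBb : (b:G) * B = B * (b:G) := by
      have hb2 : B ∈ A := hN.conj_mem _ b.2 g
      have := hcomm b ⟨B, hb2⟩
      exact congrArg Subtype.val this
    have hBC : B * (g * B * g⁻¹)⁻¹ = (b:G) * B⁻¹ := by
      calc B * (g * B * g⁻¹)⁻¹ = g * ⁅(b:G), g⁆ * g⁻¹ := by
            rw [commutatorElement_def, hB]; group
        _ = ⁅(b:G), g⁆ := h2
        _ = (b:G) * B⁻¹ := by rw [commutatorElement_def, hB]; group
    have h4 : (g * B * g⁻¹)⁻¹ = B⁻¹ * ((b:G) * B⁻¹) := by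
      rw [← hBC]; group
    have h5 : g * B * g⁻¹ = B * (b:G)⁻¹ * B := by
      have := congrArg (fun z => z⁻¹) h4
      simp only [inv_inv] at this
      rw [this]; group
    rw [h5, mul_assoc (B * (b:G)⁻¹) B (b:G), ← hBb]
    group
  -- conjugation action as additive endomorphisms
  let c : G → (↥A → ↥A) := fun g a => ⟨g * (a:G) * g⁻¹, hN.conj_mem _ a.2 g⟩
  have hcmul : ∀ g (a b : ↥A), c g (a * b) = c g a * c g b := by
    intro g a b
    apply Subtype.ext
    show g * ((a:G) * (b:G)) * g⁻¹ = (g * (a:G) * g⁻¹) * (g * (b:G) * g⁻¹)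
    group
  let Φ : G →* AddMonoid.End (Additive ↥A) :=
    { toFun := fun g => AddMonoidHom.mk' (fun a => Additive.ofMul (c g (Additive.toMul a)))
        (fun a b => by
          show Additive.ofMul (c g (Additive.toMul a * Additive.toMul b)) = _
          rw [hcmul]
          rfl)
      map_one' := by
        apply AddMonoidHom.ext
        intro a
        show Additive.ofMul (c 1 (Additive.toMul a)) = a
        have h1 : c 1 (Additive.toMul a) = Additive.toMul a := by
          apply Subtype.ext
          show 1 * ((Additive.toMul a : ↥A) : G) * 1⁻¹ = _
          group
        rw [h1]
        rfl
      map_mul' := fun g h => by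
        apply AddMonoidHom.ext
        intro a
        show Additive.ofMul (c (g * h) (Additive.toMul a))
            = Additive.ofMul (c g (c h (Additive.toMul a)))
        apply congrArg
        apply Subtype.ext
        show (g * h) * ((Additive.toMul a : ↥A) : G) * (g * h)⁻¹
            = g * (h * ((Additive.toMul a : ↥A) : G) * h⁻¹) * g⁻¹
        group }
  have hΦapp : ∀ (g : G) (a : Additive ↥A),
      Φ g a = Additive.ofMul (c g (Additive.toMul a)) := fun g a => rfl
  -- square-zero property
  have hsq : ∀ g : G, (1 - Φ g) * (1 - Φ g) = 0 := by
    intro g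
    apply AddMonoidHom.ext
    intro a
    have hE : Φ g (Φ g a) + a = Φ g a + Φ g a := by
      have h0 := hEG (Additive.toMul a) g
      have : c g (c g (Additive.toMul a)) * Additive.toMul a
          = c g (Additive.toMul a) * c g (Additive.toMul a) := by
        apply Subtype.ext
        push_cast
        exact h0
      calc Φ g (Φ g a) + a
          = Additive.ofMul (c g (c g (Additive.toMul a)) * Additive.toMul a) := rfl
        _ = Additive.ofMul (c g (Additive.toMul a) * c g (Additive.toMul a)) := by rw [this]
        _ = Φ g a + Φ g a := rfl
    show (1 - Φ g) ((1 - Φ g) a) = 0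
    have e1 : (1 - Φ g) a = a - Φ g a := rfl
    rw [e1]
    have e2 : (1 - Φ g) (a - Φ g a) = (a - Φ g a) - Φ g (a - Φ g a) := rfl
    rw [e2, map_sub]
    have e3 : (a - Φ g a) - (Φ g a - Φ g (Φ g a)) = (Φ g (Φ g a) + a) - (Φ g a + Φ g a) := by
      abel
    rw [e3, hE, sub_self]
  -- bridge: iterated commutators = operator products
  have bridge : ∀ (l : List G) (a : ↥A),
      l.foldl (fun y t => ⁅y, t⁆) (a : G)
        = ((Additive.toMul (((l.reverse.map (fun g => 1 - Φ g)).prod) (Additive.ofMul a)) : ↥A) : G) := by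
    intro l
    induction l with
    | nil => intro a; simp
    | cons t l ih =>
      intro a
      rw [List.foldl_cons]
      have hstep : ⁅(a : G), t⁆
          = ((Additive.toMul ((1 - Φ t) (Additive.ofMul a)) : ↥A) : G) := by
        have e1 : (1 - Φ t) (Additive.ofMul a) = Additive.ofMul a - Φ t (Additive.ofMul a) := rfl
        rw [e1, hΦapp]
        have e2 : Additive.toMul (Additive.ofMul a
              - Additive.ofMul (c t (Additive.toMul (Additive.ofMul a))))
            = a / (c t a) := by
          rw [toMul_sub]
          rfl
        rw [e2, div_eq_mul_inv]
        push_cast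
        show ⁅(a : G), t⁆ = (a : G) * (t * (a:G) * t⁻¹)⁻¹
        rw [commutatorElement_def]
        group
      have hmem : ⁅(a : G), t⁆ = ((Additive.toMul ((1 - Φ t) (Additive.ofMul a)) : ↥A) : G) := hstep
      rw [hmem, ih]
      congr 1
      rw [List.reverse_cons, List.map_append, List.prod_append]
      show ((l.reverse.map (fun g => 1 - Φ g)).prod * ((1 - Φ t) * 1)) (Additive.ofMul a) = _
      rw [mul_one]
      rfl
  -- conclude
  have h0 : x ∈ Subgroup.upperCentralSeries G (0 + (S.card + 1)) := by
    apply mem_upperCentralSeries_of_foldl (S.card + 1) 0 x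
    intro l hl
    rw [upperCentralSeries_zero, Subgroup.mem_bot]
    have hx' : x = ((⟨x, hxA⟩ : ↥A) : G) := rfl
    rw [hx', bridge l ⟨x, hxA⟩]
    rw [engel_ops Φ hsq S hS l.reverse (by simp [hl])]
    simp
  rwa [zero_add] at h0

end KeyModule

section Assembly

variable {G : Type*} [Group G]



lemma normCent.conj_mem {x : G} (hx : x ∈ normCent G) {g u : G}
    (hu : u ∈ Subgroup.centralizer {g}) : x * u * x⁻¹ ∈ Subgroup.centralizer {g} := by
  have h := Subgroup.mem_iInf.mp hx g
  exact (Subgroup.mem_normalizer_iff.mp h u).mp hu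

lemma normCent.commutator_commute {x : G} (hx : x ∈ normCent G) (g : G) :
    Commute ⁅x, g⁆ g := by
  have hg : g ∈ Subgroup.centralizer {g} := Subgroup.mem_centralizer_singleton_iff.mpr rfl
  have h1 : x * g * x⁻¹ ∈ Subgroup.centralizer {g} := normCent.conj_mem hx hg
  have h2 : Commute (x * g * x⁻¹) g := Subgroup.mem_centralizer_singleton_iff.mp h1
  have : ⁅x, g⁆ = (x * g * x⁻¹) * g⁻¹ := by group
  rw [this]
  exact h2.mul_left (Commute.refl g).inv_left

lemma normCent.conj_commute {x : G} (hx : x ∈ normCent G) (g : G) :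
    Commute x (g * x * g⁻¹) := by
  set c := ⁅x, g⁆ with hc
  have hcg : c ∈ Subgroup.centralizer {g} := by
    have hg : g ∈ Subgroup.centralizer {g} := Subgroup.mem_centralizer_singleton_iff.mpr rfl
    have h1 : x * g * x⁻¹ ∈ Subgroup.centralizer {g} := normCent.conj_mem hx hg
    have : c = (x * g * x⁻¹) * g⁻¹ := by rw [hc]; group
    rw [this]
    exact Subgroup.mul_mem _ h1 (Subgroup.inv_mem _ hg)
  -- x c x⁻¹ commutes with g
  have h3 : Commute (x * c * x⁻¹) g :=
    Subgroup.mem_centralizer_singleton_iff.mp (normCent.conj_mem hx hcg)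
  -- x c x⁻¹ = ⁅x, x*g⁆ commutes with x*g
  have h4 : Commute (x * c * x⁻¹) (x * g) := by
    have he : x * c * x⁻¹ = ⁅x, x * g⁆ := by rw [hc]; group
    rw [he]
    exact normCent.commutator_commute hx (x * g)
  have h5 : Commute (x * c * x⁻¹) x := by
    have := h4.mul_right h3.inv_right
    simpa [mul_assoc] using this
  -- deduce commute x c
  have h6 : Commute x c := by
    have heq : (x * c * x⁻¹) * x = x * (x * c * x⁻¹) := h5.eq
    have : x * c = x * (x * c * x⁻¹) := by
      rw [← heq]; group
    have h7 : c = x * c * x⁻¹ := by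
      exact mul_left_cancel this
    show x * c = c * x
    calc x * c = x * (x * c * x⁻¹) := by rw [← h7]
      _ = (x * c * x⁻¹) * x := h5.eq.symm
      _ = c * x := by rw [← h7]
  -- conclude
  have h8 : Commute x (x⁻¹ * c) := (Commute.refl x).inv_right.mul_right h6
  have h9 : x⁻¹ * c = g * x⁻¹ * g⁻¹ := by rw [hc]; group
  rw [h9] at h8
  have h10 := h8.inv_right
  have h11 : (g * x⁻¹ * g⁻¹)⁻¹ = g * x * g⁻¹ := by group
  rwa [h11] at h10


lemma Commute.conj_conj' {u v : G} (h : Commute u v) (a : G) :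
    Commute (a * u * a⁻¹) (a * v * a⁻¹) := by
  show (a * u * a⁻¹) * (a * v * a⁻¹) = (a * v * a⁻¹) * (a * u * a⁻¹)
  calc (a * u * a⁻¹) * (a * v * a⁻¹) = a * (u * v) * a⁻¹ := by group
    _ = a * (v * u) * a⁻¹ := by rw [h.eq]
    _ = (a * v * a⁻¹) * (a * u * a⁻¹) := by group

lemma normCent.conj_conj_commute {x : G} (hx : x ∈ normCent G) (a b : G) :
    Commute (a * x * a⁻¹) (b * x * b⁻¹) := by
  have h := (normCent.conj_commute hx (a⁻¹ * b)).conj_conj' a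
  have e : a * ((a⁻¹ * b) * x * (a⁻¹ * b)⁻¹) * a⁻¹ = b * x * b⁻¹ := by group
  rwa [e] at h

lemma closure_commute {s : Set G} (hs : ∀ a ∈ s, ∀ b ∈ s, Commute a b) :
    ∀ a ∈ Subgroup.closure s, ∀ b ∈ Subgroup.closure s, Commute a b := by
  intro a ha
  refine Subgroup.closure_induction ?_ ?_ ?_ ?_ ha
  · intro u hu b hb
    refine Subgroup.closure_induction ?_ ?_ ?_ ?_ hb
    · intro v hv; exact hs u hu v hv
    · exact Commute.one_right u
    · intro v w _ _ h1 h2; exact h1.mul_right h2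
    · intro v _ h1; exact h1.inv_right
  · intro b _; exact Commute.one_left b
  · intro u v _ _ h1 h2 b hb; exact (h1 b hb).mul_left (h2 b hb)
  · intro u _ h1 b hb; exact (h1 b hb).inv_left

theorem normCent_le_upperCentralSeries (S : Finset G)
    (hS : Subgroup.closure (S : Set G) = ⊤) :
    normCent G ≤ Subgroup.upperCentralSeries G (S.card + 1) := by
  intro x hx
  set A := Subgroup.normalClosure ({x} : Set G) with hA
  haveI hN : A.Normal := Subgroup.normalClosure_normal
  haveI := normCent_normal G
  have hAle : A ≤ normCent G := by
    apply Subgroup.normalClosure_le_normal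
    simpa using hx
  have hgen : ∀ u ∈ Group.conjugatesOfSet ({x} : Set G),
      ∀ v ∈ Group.conjugatesOfSet ({x} : Set G), Commute u v := by
    intro u hu v hv
    rw [Group.mem_conjugatesOfSet_iff] at hu hv
    obtain ⟨bu, hbu, hcu⟩ := hu
    obtain ⟨bv, hbv, hcv⟩ := hv
    rw [Set.mem_singleton_iff] at hbu hbv
    subst hbu; subst hbv
    obtain ⟨cu, hcu⟩ := isConj_iff.mp hcu
    obtain ⟨cv, hcv⟩ := isConj_iff.mp hcv
    rw [← hcu, ← hcv]
    exact normCent.conj_conj_commute hx cu cv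
  have hcomm : ∀ a b : ↥A, a * b = b * a := by
    intro a b
    have h := closure_commute hgen ↑a a.2 ↑b b.2
    exact Subtype.ext h.eq
  have hEng : ∀ (a : ↥A) (g : G), Commute ⁅(a : G), g⁆ g :=
    fun a g => normCent.commutator_commute (hAle a.2) g
  exact key_module hcomm hEng S hS (Subgroup.subset_normalClosure (Set.mem_singleton x))

end Assembly

section Main

variable {G : Type*} [Group G]

lemma CSeries_succ_eq (G : Type*) [Group G] (i : ℕ) :
    CSeries G (i+1)
      = Subgroup.comap (QuotientGroup.mk' (CSeries G i)) (normCent (G ⧸ CSeries G i)) := rfl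

lemma center_le_normCent : Subgroup.center G ≤ normCent G := by
  intro z hz
  rw [normCent, Subgroup.mem_iInf]
  intro a
  rw [Subgroup.mem_normalizer_iff]
  intro h
  have hzc : h * z = z * h := Subgroup.mem_center_iff.mp hz h
  have e : z * h * z⁻¹ = h := by
    rw [← hzc]; group
  rw [e]

lemma upperCentralSeries_le_CSeries (G : Type*) [Group G] :
    ∀ i, Subgroup.upperCentralSeries G i ≤ CSeries G i := by
  intro i
  induction i with
  | zero => rw [upperCentralSeries_zero]; exact bot_le
  | succ i ih =>
    intro x hx
    rw [CSeries_succ_eq]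
    show QuotientGroup.mk' (CSeries G i) x ∈ normCent (G ⧸ CSeries G i)
    apply center_le_normCent
    rw [Subgroup.mem_center_iff]
    intro q
    obtain ⟨b, rfl⟩ := QuotientGroup.mk'_surjective (CSeries G i) q
    have h1 : x * b * x⁻¹ * b⁻¹ ∈ CSeries G i := ih (mem_upperCentralSeries_succ_iff.mp hx b)
    have h2 : (QuotientGroup.mk' (CSeries G i)) ⁅x, b⁆ = 1 := by
      apply (QuotientGroup.eq_one_iff _).mpr
      rw [commutatorElement_def]
      exact h1
    have h3 : ⁅QuotientGroup.mk' (CSeries G i) x, QuotientGroup.mk' (CSeries G i) b⁆ = 1 := by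
      rw [← map_commutatorElement]; exact h2
    exact (commutatorElement_eq_one_iff_mul_comm.mp h3).symm

lemma exists_CSeries_top_of_nilpotent (hG : Group.IsNilpotent G) :
    ∃ n, 0 < n ∧ CSeries G n = ⊤ := by
  obtain ⟨n, hn⟩ := hG.nilpotent'
  refine ⟨n + 1, Nat.succ_pos n, ?_⟩
  have hCn : CSeries G n = ⊤ :=
    top_unique (by rw [← hn]; exact upperCentralSeries_le_CSeries G n)
  rw [CSeries_succ_eq, eq_top_iff]
  intro y _
  show QuotientGroup.mk' (CSeries G n) y ∈ normCent (G ⧸ CSeries G n)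
  have h1 : QuotientGroup.mk' (CSeries G n) y = 1 :=
    (QuotientGroup.eq_one_iff y).mpr (by rw [hCn]; trivial)
  rw [h1]
  exact Subgroup.one_mem _

lemma CSeries_le_upperCentral (hFG : Group.FG G) :
    ∀ i, ∃ m, CSeries G i ≤ Subgroup.upperCentralSeries G m := by
  intro i
  induction i with
  | zero =>
    refine ⟨0, ?_⟩
    rw [show CSeries G 0 = ⊥ from rfl]
    exact bot_le
  | succ i ih =>
    obtain ⟨m, hm⟩ := ih
    haveI : Group.FG (G ⧸ CSeries G i) :=
      Group.fg_of_surjective (QuotientGroup.mk'_surjective (CSeries G i))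
    obtain ⟨k, SQ, hcard, hSQ⟩ := Group.fg_iff'.mp this
    refine ⟨m + (SQ.card + 1), ?_⟩
    rw [CSeries_succ_eq]
    calc Subgroup.comap (QuotientGroup.mk' (CSeries G i)) (normCent (G ⧸ CSeries G i))
        ≤ Subgroup.comap (QuotientGroup.mk' (CSeries G i))
            (Subgroup.upperCentralSeries (G ⧸ CSeries G i) (SQ.card + 1)) :=
          Subgroup.comap_mono (normCent_le_upperCentralSeries SQ hSQ)
      _ ≤ Subgroup.upperCentralSeries G (m + (SQ.card + 1)) := comap_upperCentralSeries_le_add hm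

end Main

/-- A finitely generated group is nilpotent iff `G = C_n(G)` for some positive `n`. -/
theorem stmt12 (G : Type*) [Group G] (hFG : Group.FG G) :
    Group.IsNilpotent G ↔ ∃ n : ℕ, 0 < n ∧ CSeries G n = ⊤ := by
  constructor
  · intro h
    exact exists_CSeries_top_of_nilpotent h
  · rintro ⟨n, _, hC⟩
    obtain ⟨m, hm⟩ := CSeries_le_upperCentral hFG n
    exact ⟨⟨m, top_unique (by rw [← hC]; exact hm)⟩⟩
end

section
/- If G is a group with G = C_n(G) for some positive integer n (a C̄_n-group), then G is solvable of derived length at most 2n. -/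
open scoped commutatorElement

/-! ### Auxiliary: Levi-type theorem for 2-Engel groups -/

namespace LeviAux

variable {H : Type*} [Group H]

/-- `dd g u = "u·(g-1)"`: the commutator `⁅g⁻¹, u⁆`. -/
def dd (g u : H) : H := g⁻¹ * u * g * u⁻¹

lemma m6 (g : H) : dd g 1 = 1 := by simp [dd]

lemma m0 (u : H) : dd 1 u = 1 := by simp [dd]

lemma m4 (p q u : H) : dd (p * q) u = dd q (dd p u) * dd p u * dd q u := by
  simp only [dd]; group

lemma hd {A : Subgroup H} (hN : A.Normal) (g : H) {u : H} (hu : u ∈ A) : dd g u ∈ A := by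
  have h : dd g u = g⁻¹ * u * g⁻¹⁻¹ * u⁻¹ := by rw [inv_inv]; rfl
  rw [h]
  exact mul_mem (hN.conj_mem u hu g⁻¹) (inv_mem hu)

variable (E : ∀ a b : H, ⁅⁅a, b⁆, b⁆ = 1)

include E

lemma commE (a b : H) : Commute ⁅a, b⁆ b :=
  commutatorElement_eq_one_iff_commute.mp (E a b)

lemma commE' (a b : H) : Commute ⁅a, b⁆ a := by
  have h := commutatorElement_eq_one_iff_commute.mp (E b a)
  rw [← commutatorElement_inv]
  exact h.inv_left

lemma m3 (g u : H) : dd g (dd g u) = 1 := by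
  have h1 : Commute (dd g u) g⁻¹ := by
    have h2 : ⁅g⁻¹, u⁆ = dd g u := by rw [commutatorElement_def, dd, inv_inv]
    rw [← h2]
    exact commE' E g⁻¹ u
  have h : dd g u * g = g * dd g u := by
    have := h1.inv_right
    rwa [inv_inv] at this
  show g⁻¹ * dd g u * g * (dd g u)⁻¹ = 1
  rw [mul_assoc g⁻¹ (dd g u) g, h, ← mul_assoc, inv_mul_cancel, one_mul, mul_inv_cancel]

lemma ddq (g u : H) : dd g⁻¹ (dd g u) = 1 := by
  have h := m4 g g⁻¹ (dd g u)
  rw [mul_inv_cancel, m0, m3 E, m6] at h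
  simpa using h.symm

lemma m5 (g u : H) : dd g⁻¹ u = (dd g u)⁻¹ := by
  have h := m4 g g⁻¹ u
  rw [mul_inv_cancel, m0, ddq E, one_mul] at h
  exact eq_inv_of_mul_eq_one_right h.symm

omit E in
lemma m1 {A : Subgroup H} (hA : ∀ u ∈ A, ∀ v ∈ A, Commute u v) (hN : A.Normal)
    (g : H) {u v : H} (hu : u ∈ A) (hv : v ∈ A) : dd g (u * v) = dd g u * dd g v := by
  have key : dd g v * u⁻¹ = u⁻¹ * dd g v := ((hA _ (hd hN g hv) _ hu).inv_right).eq
  calc dd g (u * v) = (g⁻¹ * u * g) * (dd g v * u⁻¹) := by simp only [dd]; group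
    _ = (g⁻¹ * u * g) * (u⁻¹ * dd g v) := by rw [key]
    _ = dd g u * dd g v := by simp only [dd]; group

omit E in
lemma m2 {A : Subgroup H} (hA : ∀ u ∈ A, ∀ v ∈ A, Commute u v) (hN : A.Normal)
    (g : H) {u : H} (hu : u ∈ A) : dd g u⁻¹ = (dd g u)⁻¹ := by
  have h := m1 hA hN g hu (inv_mem hu)
  rw [mul_inv_cancel, m6] at h
  exact eq_inv_of_mul_eq_one_right h.symm

omit E in
lemma m1c {A : Subgroup H} (hA : ∀ u ∈ A, ∀ v ∈ A, Commute u v) (hN : A.Normal)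
    (g : H) {a b c : H} (ha : a ∈ A) (hb : b ∈ A) (hc : c ∈ A) :
    dd g (a * b * c) = dd g a * dd g b * dd g c := by
  rw [m1 hA hN g (mul_mem ha hb) hc, m1 hA hN g ha hb]

lemma E1lem {A : Subgroup H} (hA : ∀ u ∈ A, ∀ v ∈ A, Commute u v) (hN : A.Normal)
    (p q : H) {u : H} (hu : u ∈ A) :
    1 = dd q (dd p (dd q (dd p u))) * dd q (dd p (dd q u)) *
        (dd p (dd q (dd p u)) * dd p (dd q u)) * dd q (dd p u) := by
  have h3 := m4 p q (dd (p * q) u)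
  rw [m3 E] at h3
  rw [m4 p q u] at h3
  rw [m1c hA hN p (hd hN q (hd hN p hu)) (hd hN p hu) (hd hN q hu)] at h3
  rw [m1c hA hN q (hd hN q (hd hN p hu)) (hd hN p hu) (hd hN q hu)] at h3
  rw [m3 E p u] at h3
  rw [m3 E q (dd p u)] at h3
  rw [m3 E q u] at h3
  simp only [mul_one, one_mul] at h3
  rw [m1 hA hN q (hd hN p (hd hN q (hd hN p hu))) (hd hN p (hd hN q hu))] at h3
  exact h3

lemma K2lem {A : Subgroup H} (hA : ∀ u ∈ A, ∀ v ∈ A, Commute u v) (hN : A.Normal)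
    (p q : H) {u : H} (hu : u ∈ A) : dd p (dd q (dd p u)) = 1 := by
  have L := E1lem E hA hN p q (hd hN p hu)
  rw [m3 E p u] at L
  simp only [m6, one_mul, mul_one] at L
  -- L : 1 = dd q (dd p (dd q (dd p u))) * dd p (dd q (dd p u))
  have L2 := congrArg (dd q) L.symm
  rw [m6] at L2
  rw [m1 hA hN q (hd hN q (hd hN p (hd hN q (hd hN p hu)))) (hd hN p (hd hN q (hd hN p hu)))] at L2
  rw [m3 E q (dd p (dd q (dd p u))), one_mul] at L2
  rw [L2, one_mul] at L
  exact L.symm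

lemma K1lem {A : Subgroup H} (hA : ∀ u ∈ A, ∀ v ∈ A, Commute u v) (hN : A.Normal)
    (p q : H) {u : H} (hu : u ∈ A) : dd q (dd p u) = (dd p (dd q u))⁻¹ := by
  have L := E1lem E hA hN p q hu
  rw [K2lem E hA hN p q hu] at L
  rw [K2lem E hA hN q p hu] at L
  simp only [m6, one_mul, mul_one] at L
  -- L : 1 = dd p (dd q u) * dd q (dd p u)
  exact eq_inv_of_mul_eq_one_right L.symm

lemma K4lem {A : Subgroup H} (hA : ∀ u ∈ A, ∀ v ∈ A, Commute u v) (hN : A.Normal)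
    (g1 g2 g3 : H) {u : H} (hu : u ∈ A) :
    dd g3 (dd g2 (dd g1 u)) * dd g3 (dd g2 (dd g1 u)) = 1 := by
  have e := K1lem E hA hN g1 (g2 * g3) hu
  rw [m4 g2 g3 (dd g1 u), m4 g2 g3 u] at e
  rw [m1c hA hN g1 (hd hN g3 (hd hN g2 hu)) (hd hN g2 hu) (hd hN g3 hu)] at e
  nth_rewrite 2 [K1lem E hA hN g1 g2 hu] at e
  rw [K1lem E hA hN g1 g3 hu] at e
  -- e : X * P1⁻¹ * P2⁻¹ = (P3 * P1 * P2)⁻¹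
  have hi : dd g3 (dd g2 (dd g1 u)) =
      (dd g1 (dd g3 (dd g2 u)) * dd g1 (dd g2 u) * dd g1 (dd g3 u))⁻¹ *
        dd g1 (dd g3 u) * dd g1 (dd g2 u) := by
    rw [← e]; group
  have memP1 : dd g1 (dd g2 u) ∈ A := hd hN g1 (hd hN g2 hu)
  have memP2 : dd g1 (dd g3 u) ∈ A := hd hN g1 (hd hN g3 hu)
  have memP3 : dd g1 (dd g3 (dd g2 u)) ∈ A := hd hN g1 (hd hN g3 (hd hN g2 hu))
  have hcomm1 : (dd g1 (dd g3 u))⁻¹ * (dd g1 (dd g2 u))⁻¹ * (dd g1 (dd g3 (dd g2 u)))⁻¹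
      = (dd g1 (dd g3 (dd g2 u)))⁻¹ * ((dd g1 (dd g3 u))⁻¹ * (dd g1 (dd g2 u))⁻¹) := by
    have c : Commute ((dd g1 (dd g3 u))⁻¹ * (dd g1 (dd g2 u))⁻¹) (dd g1 (dd g3 (dd g2 u)))⁻¹ :=
      Commute.mul_left ((hA _ memP2 _ memP3).inv_left.inv_right)
        ((hA _ memP1 _ memP3).inv_left.inv_right)
    exact c.eq
  have hcomm2 : (dd g1 (dd g3 u))⁻¹ * (dd g1 (dd g2 u))⁻¹ * dd g1 (dd g3 u) * dd g1 (dd g2 u)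
      = 1 := by
    have c : Commute ((dd g1 (dd g3 u))⁻¹) ((dd g1 (dd g2 u))⁻¹) :=
      (hA _ memP2 _ memP1).inv_left.inv_right
    have h := commutatorElement_eq_one_iff_commute.mpr c
    rwa [commutatorElement_def, inv_inv, inv_inv] at h
  have hii : dd g3 (dd g2 (dd g1 u)) = dd g1 (dd g3 (dd g2 u)) := by
    calc dd g3 (dd g2 (dd g1 u))
        = dd g3 ((dd g1 (dd g2 u))⁻¹) := by rw [K1lem E hA hN g1 g2 hu]
      _ = (dd g3 (dd g1 (dd g2 u)))⁻¹ := m2 hA hN g3 memP1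
      _ = ((dd g1 (dd g3 (dd g2 u)))⁻¹)⁻¹ := by rw [K1lem E hA hN g1 g3 (hd hN g2 hu)]
      _ = dd g1 (dd g3 (dd g2 u)) := inv_inv _
  have hi' : dd g3 (dd g2 (dd g1 u)) = (dd g1 (dd g3 (dd g2 u)))⁻¹ := by
    calc dd g3 (dd g2 (dd g1 u))
        = (dd g1 (dd g3 (dd g2 u)) * dd g1 (dd g2 u) * dd g1 (dd g3 u))⁻¹ *
            dd g1 (dd g3 u) * dd g1 (dd g2 u) := hi
      _ = (dd g1 (dd g3 u))⁻¹ * (dd g1 (dd g2 u))⁻¹ * (dd g1 (dd g3 (dd g2 u)))⁻¹ *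
            (dd g1 (dd g3 u) * dd g1 (dd g2 u)) := by group
      _ = (dd g1 (dd g3 (dd g2 u)))⁻¹ * ((dd g1 (dd g3 u))⁻¹ * (dd g1 (dd g2 u))⁻¹) *
            (dd g1 (dd g3 u) * dd g1 (dd g2 u)) := by rw [hcomm1]
      _ = (dd g1 (dd g3 (dd g2 u)))⁻¹ *
            ((dd g1 (dd g3 u))⁻¹ * (dd g1 (dd g2 u))⁻¹ * dd g1 (dd g3 u) * dd g1 (dd g2 u)) := by
          group
      _ = (dd g1 (dd g3 (dd g2 u)))⁻¹ := by rw [hcomm2, mul_one]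
  rw [hii]
  nth_rewrite 2 [hii.symm.trans hi']
  exact mul_inv_cancel _

lemma conj_commute (x c1 c2 : H) : Commute (c1 * x * c1⁻¹) (c2 * x * c2⁻¹) := by
  have base : Commute x ((c1⁻¹ * c2) * x * (c1⁻¹ * c2)⁻¹) := by
    have h1 : Commute ⁅c1⁻¹ * c2, x⁆ x := commE E _ x
    have h2 : (c1⁻¹ * c2) * x * (c1⁻¹ * c2)⁻¹ = ⁅c1⁻¹ * c2, x⁆ * x := by
      rw [commutatorElement_def]; group
    rw [h2]
    exact (h1.symm).mul_right (Commute.refl x)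
  have h3 := base.map (MulAut.conj c1).toMonoidHom
  simp only [MulEquiv.coe_toMonoidHom, MulAut.conj_apply] at h3
  have h4 : c1 * ((c1⁻¹ * c2) * x * (c1⁻¹ * c2)⁻¹) * c1⁻¹ = c2 * x * c2⁻¹ := by group
  rwa [h4] at h3

lemma ncl_comm (x : H) {u v : H} (hu : u ∈ Subgroup.normalClosure {x})
    (hv : v ∈ Subgroup.normalClosure {x}) : Commute u v := by
  have base2 : ∀ b1 ∈ Group.conjugatesOfSet ({x} : Set H),
      ∀ b2 ∈ Group.conjugatesOfSet ({x} : Set H), Commute b1 b2 := by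
    intro b1 hb1 b2 hb2
    rw [Group.mem_conjugatesOfSet_iff] at hb1 hb2
    obtain ⟨a1, ha1, hc1⟩ := hb1
    obtain ⟨a2, ha2, hc2⟩ := hb2
    rw [Set.mem_singleton_iff] at ha1 ha2
    rw [ha1] at hc1
    rw [ha2] at hc2
    obtain ⟨c1, hc1⟩ := isConj_iff.mp hc1
    obtain ⟨c2, hc2⟩ := isConj_iff.mp hc2
    rw [← hc1, ← hc2]
    exact conj_commute E x c1 c2
  have hsub : Group.conjugatesOfSet ({x} : Set H) ⊆
      ↑(Subgroup.centralizer (Group.conjugatesOfSet ({x} : Set H))) :=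
    fun b hb => Subgroup.mem_centralizer_iff.mpr (fun h hh => (base2 h hh b hb).eq)
  have hle : Subgroup.normalClosure {x} ≤
      Subgroup.centralizer (Group.conjugatesOfSet ({x} : Set H)) :=
    (Subgroup.closure_le _).mpr hsub
  have hv' := hle hv
  have hle2 : Subgroup.normalClosure {x} ≤ Subgroup.centralizer {v} :=
    (Subgroup.closure_le _).mpr (fun b hb =>
      Subgroup.mem_centralizer_singleton_iff.mpr ((Subgroup.mem_centralizer_iff.mp hv') b hb))
  exact Subgroup.mem_centralizer_singleton_iff.mp (hle2 hu)

/-- Levi's theorem: a 2-Engel group is metabelian. -/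
theorem levi (x y z w : H) : ⁅⁅x, y⁆, ⁅z, w⁆⁆ = 1 := by
  have hN : (Subgroup.normalClosure ({x} : Set H)).Normal := Subgroup.normalClosure_normal
  have hA : ∀ u ∈ Subgroup.normalClosure ({x} : Set H),
      ∀ v ∈ Subgroup.normalClosure ({x} : Set H), Commute u v :=
    fun u hu v hv => ncl_comm E x hu hv
  have hx : x ∈ Subgroup.normalClosure ({x} : Set H) :=
    Subgroup.subset_normalClosure (Set.mem_singleton x)
  have hs : x * y * x⁻¹ * y⁻¹ ∈ Subgroup.normalClosure ({x} : Set H) := by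
    have h : x * y * x⁻¹ * y⁻¹ = x * (y * x⁻¹ * y⁻¹) := by group
    rw [h]
    exact mul_mem hx (hN.conj_mem x⁻¹ (inv_mem hx) y)
  -- the square of `dd z (dd w s)` is trivial
  have hrel : dd y x = dd y (x * y * x⁻¹ * y⁻¹) * (x * y * x⁻¹ * y⁻¹) := by
    simp only [dd]; group
  have hz1 : dd z (dd w (dd y x)) =
      dd z (dd w (dd y (x * y * x⁻¹ * y⁻¹))) * dd z (dd w (x * y * x⁻¹ * y⁻¹)) := by
    rw [hrel, m1 hA hN w (hd hN y hs) hs, m1 hA hN z (hd hN w (hd hN y hs)) (hd hN w hs)]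
  have hYY : dd z (dd w (x * y * x⁻¹ * y⁻¹)) * dd z (dd w (x * y * x⁻¹ * y⁻¹)) = 1 := by
    have hYeq : dd z (dd w (x * y * x⁻¹ * y⁻¹)) =
        (dd z (dd w (dd y (x * y * x⁻¹ * y⁻¹))))⁻¹ * dd z (dd w (dd y x)) := by
      rw [hz1]; group
    have hQ2 := K4lem E hA hN y w z hs
    have hP2 := K4lem E hA hN y w z hx
    have hPQ : dd z (dd w (dd y x)) * (dd z (dd w (dd y (x * y * x⁻¹ * y⁻¹))))⁻¹
        = (dd z (dd w (dd y (x * y * x⁻¹ * y⁻¹))))⁻¹ * dd z (dd w (dd y x)) :=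
      ((hA _ (hd hN z (hd hN w (hd hN y hx))) _ (hd hN z (hd hN w (hd hN y hs)))).inv_right).eq
    rw [hYeq]
    calc (dd z (dd w (dd y (x * y * x⁻¹ * y⁻¹))))⁻¹ * dd z (dd w (dd y x)) *
          ((dd z (dd w (dd y (x * y * x⁻¹ * y⁻¹))))⁻¹ * dd z (dd w (dd y x)))
        = (dd z (dd w (dd y (x * y * x⁻¹ * y⁻¹))))⁻¹ *
            (dd z (dd w (dd y x)) * (dd z (dd w (dd y (x * y * x⁻¹ * y⁻¹))))⁻¹) *
            dd z (dd w (dd y x)) := by group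
      _ = (dd z (dd w (dd y (x * y * x⁻¹ * y⁻¹))))⁻¹ *
            ((dd z (dd w (dd y (x * y * x⁻¹ * y⁻¹))))⁻¹ * dd z (dd w (dd y x))) *
            dd z (dd w (dd y x)) := by rw [hPQ]
      _ = (dd z (dd w (dd y (x * y * x⁻¹ * y⁻¹))) * dd z (dd w (dd y (x * y * x⁻¹ * y⁻¹))))⁻¹ *
            (dd z (dd w (dd y x)) * dd z (dd w (dd y x))) := by group
      _ = 1 := by rw [hQ2, hP2]; simp
  -- compute dd t s
  have hB : dd (w * z) (dd (z * w) (x * y * x⁻¹ * y⁻¹)) =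
      dd w (dd z (x * y * x⁻¹ * y⁻¹)) * dd z (dd w (x * y * x⁻¹ * y⁻¹)) := by
    rw [m4 z w (x * y * x⁻¹ * y⁻¹)]
    rw [m1c hA hN (w * z) (hd hN w (hd hN z hs)) (hd hN z hs) (hd hN w hs)]
    rw [m4 w z (dd w (dd z (x * y * x⁻¹ * y⁻¹))), m4 w z (dd z (x * y * x⁻¹ * y⁻¹)),
      m4 w z (dd w (x * y * x⁻¹ * y⁻¹))]
    rw [m3 E w (dd z (x * y * x⁻¹ * y⁻¹))]
    rw [m3 E z (x * y * x⁻¹ * y⁻¹)]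
    rw [m3 E w (x * y * x⁻¹ * y⁻¹)]
    rw [K2lem E hA hN z w hs]
    simp only [m6, one_mul, mul_one]
  have hts : dd (z * w * z⁻¹ * w⁻¹) (x * y * x⁻¹ * y⁻¹) = 1 := by
    have hsp : z * w * z⁻¹ * w⁻¹ = (z * w) * (w * z)⁻¹ := by group
    rw [hsp, m4 (z * w) ((w * z)⁻¹) (x * y * x⁻¹ * y⁻¹)]
    rw [m5 E (w * z) (dd (z * w) (x * y * x⁻¹ * y⁻¹)), m5 E (w * z) (x * y * x⁻¹ * y⁻¹)]
    rw [hB, m4 z w (x * y * x⁻¹ * y⁻¹), m4 w z (x * y * x⁻¹ * y⁻¹)]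
    have e : (dd w (dd z (x * y * x⁻¹ * y⁻¹)) * dd z (dd w (x * y * x⁻¹ * y⁻¹)))⁻¹ *
          (dd w (dd z (x * y * x⁻¹ * y⁻¹)) * dd z (x * y * x⁻¹ * y⁻¹) * dd w (x * y * x⁻¹ * y⁻¹)) *
          (dd z (dd w (x * y * x⁻¹ * y⁻¹)) * dd w (x * y * x⁻¹ * y⁻¹) * dd z (x * y * x⁻¹ * y⁻¹))⁻¹
        = (dd z (dd w (x * y * x⁻¹ * y⁻¹)))⁻¹ *
            (dd z (x * y * x⁻¹ * y⁻¹) * dd w (x * y * x⁻¹ * y⁻¹) *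
              (dd z (x * y * x⁻¹ * y⁻¹))⁻¹ * (dd w (x * y * x⁻¹ * y⁻¹))⁻¹) *
            (dd z (dd w (x * y * x⁻¹ * y⁻¹)))⁻¹ := by group
    rw [e]
    have hc12 : dd z (x * y * x⁻¹ * y⁻¹) * dd w (x * y * x⁻¹ * y⁻¹) *
        (dd z (x * y * x⁻¹ * y⁻¹))⁻¹ * (dd w (x * y * x⁻¹ * y⁻¹))⁻¹ = 1 := by
      have c := hA _ (hd hN z hs) _ (hd hN w hs)
      have h := commutatorElement_eq_one_iff_commute.mpr c
      rwa [commutatorElement_def] at h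
    rw [hc12, mul_one]
    have h2 : (dd z (dd w (x * y * x⁻¹ * y⁻¹)))⁻¹ * (dd z (dd w (x * y * x⁻¹ * y⁻¹)))⁻¹
        = (dd z (dd w (x * y * x⁻¹ * y⁻¹)) * dd z (dd w (x * y * x⁻¹ * y⁻¹)))⁻¹ := by group
    rw [h2, hYY]
    simp
  -- conclude
  have hcst : (x * y * x⁻¹ * y⁻¹) * (z * w * z⁻¹ * w⁻¹)
      = (z * w * z⁻¹ * w⁻¹) * (x * y * x⁻¹ * y⁻¹) := by
    calc (x * y * x⁻¹ * y⁻¹) * (z * w * z⁻¹ * w⁻¹)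
        = (z * w * z⁻¹ * w⁻¹) * (dd (z * w * z⁻¹ * w⁻¹) (x * y * x⁻¹ * y⁻¹)) *
            (x * y * x⁻¹ * y⁻¹) := by simp only [dd]; group
      _ = (z * w * z⁻¹ * w⁻¹) * 1 * (x * y * x⁻¹ * y⁻¹) := by rw [hts]
      _ = (z * w * z⁻¹ * w⁻¹) * (x * y * x⁻¹ * y⁻¹) := by rw [mul_one]
  rw [commutatorElement_eq_one_iff_commute, commutatorElement_def x y, commutatorElement_def z w]
  exact hcst

end LeviAux

section NormCentApp

variable (Q : Type*) [Group Q]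

lemma normCent_engel_s15 {a : Q} (b : Q) (ha : a ∈ normCent Q) : ⁅⁅a, b⁆, b⁆ = 1 := by
  have h1 : a ∈ Subgroup.normalizer (Subgroup.centralizer {b} : Set Q) := (Subgroup.mem_iInf.mp ha) b
  have h2 := (Subgroup.mem_normalizer_iff.mp h1 b).mp
    (Subgroup.mem_centralizer_singleton_iff.mpr rfl)
  have h3 : (a * b * a⁻¹) * b = b * (a * b * a⁻¹) :=
    Subgroup.mem_centralizer_singleton_iff.mp h2
  have hc : Commute ⁅a, b⁆ b := by
    have h4 : ⁅a, b⁆ = (a * b * a⁻¹) * b⁻¹ := rfl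
    rw [h4]
    exact Commute.mul_left h3 ((Commute.refl b).inv_left)
  exact commutatorElement_eq_one_iff_commute.mpr hc

lemma normCent_subtype_engel : ∀ a b : ↥(normCent Q), ⁅⁅a, b⁆, b⁆ = 1 := by
  intro a b
  apply Subtype.ext
  have h : ((⁅⁅a, b⁆, b⁆ : ↥(normCent Q)) : Q) = ⁅⁅(a : Q), (b : Q)⁆, (b : Q)⁆ := by
    simp [commutatorElement_def]
  rw [h]
  exact normCent_engel_s15 Q (b : Q) a.2

lemma normCent_comm4 {a b c d : Q} (ha : a ∈ normCent Q) (hb : b ∈ normCent Q)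
    (hc : c ∈ normCent Q) (hd : d ∈ normCent Q) : Commute ⁅a, b⁆ ⁅c, d⁆ := by
  have a' : ↥(normCent Q) := ⟨a, ha⟩
  have h : ⁅⁅(⟨a, ha⟩ : ↥(normCent Q)), (⟨b, hb⟩ : ↥(normCent Q))⁆,
      ⁅(⟨c, hc⟩ : ↥(normCent Q)), (⟨d, hd⟩ : ↥(normCent Q))⁆⁆ = 1 :=
    LeviAux.levi (normCent_subtype_engel Q) _ _ _ _
  have h2 := congrArg (normCent Q).subtype h
  rw [map_commutatorElement, map_commutatorElement, map_commutatorElement, map_one] at h2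
  simp only [Subgroup.coe_subtype] at h2
  exact commutatorElement_eq_one_iff_commute.mp h2

lemma normCent_metabelian :
    ⁅⁅normCent Q, normCent Q⁆, ⁅normCent Q, normCent Q⁆⁆ = (⊥ : Subgroup Q) := by
  rw [Subgroup.commutator_eq_bot_iff_le_centralizer, Subgroup.commutator_le]
  intro g1 hg1 g2 hg2
  rw [Subgroup.mem_centralizer_iff]
  intro h hh
  have hcen : ⁅normCent Q, normCent Q⁆ ≤ Subgroup.centralizer {⁅g1, g2⁆} := by
    rw [Subgroup.commutator_le]
    intro c hc d hd
    exact Subgroup.mem_centralizer_singleton_iff.mpr (normCent_comm4 Q hc hd hg1 hg2).eq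
  exact Subgroup.mem_centralizer_singleton_iff.mp (hcen hh)

end NormCentApp

lemma CSeries_zero (G : Type*) [Group G] : CSeries G 0 = ⊥ := rfl

lemma CSeries_succ (G : Type*) [Group G] (m : ℕ) :
    CSeries G (m + 1) =
      (normCent (G ⧸ CSeries G m)).comap (QuotientGroup.mk' (CSeries G m)) := rfl

lemma derivedSeries_le_CSeries (G : Type*) [Group G] (n : ℕ) (h : CSeries G n = ⊤) :
    ∀ k : ℕ, derivedSeries G (2 * k) ≤ CSeries G (n - k) := by
  intro k
  induction k with
  | zero => rw [Nat.sub_zero, h]; exact le_top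
  | succ k ih =>
    rcases hnk : n - k with _ | m
    · have hz : n - (k + 1) = 0 := by omega
      rw [hz]
      rw [hnk] at ih
      have h0 : derivedSeries G (2 * k) = ⊥ := le_bot_iff.mp (by rw [← CSeries_zero G]; exact ih)
      have he : 2 * (k + 1) = 2 * k + 1 + 1 := by ring
      rw [he, derivedSeries_succ, derivedSeries_succ, h0, Subgroup.commutator_bot_left,
        Subgroup.commutator_bot_left, CSeries_zero]
    · have hm : n - (k + 1) = m := by omega
      rw [hnk] at ih
      rw [hm]
      have h2 : Subgroup.map (QuotientGroup.mk' (CSeries G m)) (derivedSeries G (2 * k)) ≤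
          normCent (G ⧸ CSeries G m) := by
        rw [Subgroup.map_le_iff_le_comap, ← CSeries_succ]
        exact ih
      have he : 2 * (k + 1) = 2 * k + 1 + 1 := by ring
      have h3 : Subgroup.map (QuotientGroup.mk' (CSeries G m)) (derivedSeries G (2 * (k + 1))) ≤
          ⊥ := by
        rw [he, derivedSeries_succ, derivedSeries_succ, Subgroup.map_commutator,
          Subgroup.map_commutator]
        refine le_trans ?_ (le_of_eq (normCent_metabelian (G ⧸ CSeries G m)))
        exact Subgroup.commutator_mono (Subgroup.commutator_mono h2 h2)
          (Subgroup.commutator_mono h2 h2)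
      have h4 := Subgroup.map_le_iff_le_comap.mp h3
      rwa [MonoidHom.comap_bot, QuotientGroup.ker_mk'] at h4

/-- A `C̄_n`-group is solvable of derived length at most `2n`. -/
theorem stmt15 (G : Type*) [Group G] (n : ℕ) (hn : 0 < n) (h : CSeries G n = ⊤) :
    derivedSeries G (2 * n) = ⊥ := by
  have key := derivedSeries_le_CSeries G n h n
  rw [Nat.sub_self, CSeries_zero] at key
  exact le_bot_iff.mp key
end
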